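/- arXiv:1505.00731 — 4 statements merged into one kernel-verified Lean document; each statement's English description precedes it below -/
import Mathlib

section
/- There exists a sparse simple set: a set S of binary strings that is simple and satisfies (#{x ∈ S : |x| = n})/2^n → 0 as n → ∞. -/
open Filter

/-- Kolmogorov complexity of `m` relative to machine `U` (∞ if `m` has no description). -/
noncomputable def KU (U : List Bool →. ℕ) (m : ℕ) : ℕ∞ :=
  sInf {l : ℕ∞ | ∃ p : List Bool, m ∈ U p ∧ (p.length : ℕ∞) = l}

/-- `U` is an optimal machine. -/
def OptimalMachine (U : List Bool →. ℕ) : Prop :=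
  Partrec U ∧ ∀ V : List Bool →. ℕ, Partrec V → ∃ c : ℕ, ∀ m, KU U m ≤ KU V m + (c : ℕ∞)

/-- A total function on strings is length-bounded if it increases length by at most a constant. -/
def LengthBounded (h : List Bool → List Bool) : Prop :=
  ∃ c : ℕ, ∀ x, (h x).length ≤ x.length + c

/-- `U` is an effectively optimal machine. -/
def EffOptimal (U : List Bool →. ℕ) : Prop :=
  Partrec U ∧ ∀ V : List Bool →. ℕ, Partrec V →
    ∃ h : List Bool → List Bool, Computable h ∧ LengthBounded h ∧ ∀ x, U (h x) = V x

/-- `x` is an error point of `A` as an approximate decision procedure for `dom U`. -/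
def ErrorPoint (U : List Bool →. ℕ) (A : List Bool →. Bool) (x : List Bool) : Prop :=
  ¬(((U x).Dom ∧ true ∈ A x) ∨ (¬(U x).Dom ∧ false ∈ A x))

/-- fraction of error points among strings of length at most `n`. -/
noncomputable def errRate (U : List Bool →. ℕ) (A : List Bool →. Bool) (n : ℕ) : ℝ :=
  (Set.ncard {x : List Bool | x.length ≤ n ∧ ErrorPoint U A x} : ℝ) / 2 ^ (n + 1)

def LeftTotal (U : List Bool →. ℕ) : Prop :=
  ∀ x y : List Bool, x.length = y.length → List.Lex (· < ·) x y → (U y).Dom → (U x).Dom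

noncomputable def haltRate (U : List Bool →. ℕ) (n : ℕ) : ℝ :=
  (Set.ncard {x : List Bool | x.length ≤ n ∧ (U x).Dom} : ℝ) / 2 ^ (n + 1)

def MOptimal (S : Set (List Bool)) : Prop :=
  REPred (· ∈ S) ∧ ∀ W : Set (List Bool), REPred (· ∈ W) →
    ∃ h : List Bool → List Bool, Computable h ∧ LengthBounded h ∧ ∀ x, x ∈ W ↔ h x ∈ S

def SimpleSet (S : Set (List Bool)) : Prop :=
  REPred (· ∈ S) ∧ Sᶜ.Infinite ∧
    ∀ W : Set (List Bool), REPred (· ∈ W) → W ⊆ Sᶜ → W.Finite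

noncomputable def compTime (c : Nat.Partrec.Code) (p : List Bool) : ℕ :=
  sInf {k : ℕ | (Nat.Partrec.Code.evaln k c (Encodable.encode p)).isSome}

noncomputable def BB (U : List Bool →. ℕ) (c : Nat.Partrec.Code) (n : ℕ) : ℕ :=
  sSup {t : ℕ | ∃ p : List Bool, p.length ≤ n ∧ (U p).Dom ∧ t = compTime c p}

noncomputable def Bfun (U : List Bool →. ℕ) (n : ℕ) : ℕ :=
  sSup {m : ℕ | KU U m ≤ (n : ℕ∞)}



open Nat.Partrec (Code)
open Nat.Partrec.Code Encodable Denumerable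

namespace SparseSimpleAux

/-- `GoodB e m` : `m = pair k s` codes a string `x` (decode of `k`) of length `> 2 e`
such that machine `e` halts on `x` within `s` steps. -/
def GoodB (e m : ℕ) : Bool :=
  match (Encodable.decode m.unpair.1 : Option (List Bool)) with
  | none => false
  | some x => decide (2 * e < x.length) &&
      (evaln m.unpair.2 (ofNat Code e) (Encodable.encode x)).isSome

def NoneBelow (e m : ℕ) : Bool := Nat.rec true (fun j ih => ih && !GoodB e j) m

def D (x : List Bool) (n : ℕ) : Bool :=
  GoodB n.unpair.1 n.unpair.2 && NoneBelow n.unpair.1 n.unpair.2 &&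
    decide ((Encodable.decode n.unpair.2.unpair.1 : Option (List Bool)) = some x)

theorem primrec_GoodB : Primrec₂ GoodB := by
  have h1 : Primrec fun p : ℕ × ℕ => (Encodable.decode p.2.unpair.1 : Option (List Bool)) :=
    Primrec.decode.comp (Primrec.fst.comp (Primrec.unpair.comp Primrec.snd))
  have h2 : Primrec₂ fun (p : ℕ × ℕ) (x : List Bool) =>
      decide (2 * p.1 < x.length) &&
        (evaln p.2.unpair.2 (ofNat Code p.1) (Encodable.encode x)).isSome := by
    have hlt : Primrec₂ fun (p : ℕ × ℕ) (x : List Bool) => decide (2 * p.1 < x.length) :=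
      (Primrec.nat_lt.comp
        (Primrec.nat_mul.comp (Primrec.const 2) (Primrec.fst.comp Primrec.fst))
        (Primrec.list_length.comp Primrec.snd)).decide
    have hev : Primrec₂ fun (p : ℕ × ℕ) (x : List Bool) =>
        (evaln p.2.unpair.2 (ofNat Code p.1) (Encodable.encode x)).isSome := by
      have := primrec_evaln.comp
        (Primrec.pair
          (Primrec.pair
            (Primrec.snd.comp (Primrec.unpair.comp (Primrec.snd.comp
              (Primrec.fst : Primrec fun q : (ℕ × ℕ) × List Bool => q.1))))
            ((Primrec.ofNat Code).comp (Primrec.fst.comp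
              (Primrec.fst : Primrec fun q : (ℕ × ℕ) × List Bool => q.1))))
          (Primrec.encode.comp (Primrec.snd : Primrec fun q : (ℕ × ℕ) × List Bool => q.2)))
      exact (Primrec.option_isSome.comp this).to₂
    exact ((Primrec.dom_bool₂ (· && ·)).comp (hlt.comp Primrec.fst Primrec.snd)
      (hev.comp Primrec.fst Primrec.snd)).to₂
  have := Primrec.option_casesOn h1 (Primrec.const false).to₂ h2
  exact this.to₂.of_eq fun e m => by
    simp only [GoodB]
    cases (Encodable.decode m.unpair.1 : Option (List Bool)) <;> rfl

theorem primrec_NoneBelow : Primrec₂ NoneBelow := by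
  have hg : Primrec₂ fun (e : ℕ) (q : ℕ × Bool) => q.2 && !GoodB e q.1 :=
    ((Primrec.dom_bool₂ (· && ·)).comp
      (Primrec.snd.comp Primrec.snd)
      ((Primrec.dom_bool (!·)).comp
        (primrec_GoodB.comp Primrec.fst (Primrec.fst.comp Primrec.snd)))).to₂
  have := Primrec.nat_rec (Primrec.const true : Primrec fun _ : ℕ => true) hg
  exact this.of_eq fun e m => by
    induction m with
    | zero => rfl
    | succ j ih => simp only [NoneBelow] at ih ⊢

theorem computable_D : Computable₂ D := by
  have h1 : Primrec₂ fun (x : List Bool) (n : ℕ) =>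
      GoodB n.unpair.1 n.unpair.2 && NoneBelow n.unpair.1 n.unpair.2 :=
    ((Primrec.dom_bool₂ (· && ·)).comp
      (primrec_GoodB.comp (Primrec.fst.comp (Primrec.unpair.comp Primrec.snd))
        (Primrec.snd.comp (Primrec.unpair.comp Primrec.snd)))
      (primrec_NoneBelow.comp (Primrec.fst.comp (Primrec.unpair.comp Primrec.snd))
        (Primrec.snd.comp (Primrec.unpair.comp Primrec.snd)))).to₂
  have h2 : Primrec₂ fun (x : List Bool) (n : ℕ) =>
      decide ((Encodable.decode n.unpair.2.unpair.1 : Option (List Bool)) = some x) :=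
    (Primrec.eq.comp
      (Primrec.decode.comp (Primrec.fst.comp (Primrec.unpair.comp
        (Primrec.snd.comp (Primrec.unpair.comp Primrec.snd)))))
      (Primrec.option_some.comp Primrec.fst)).decide.to₂
  exact Primrec₂.to_comp <|
    ((Primrec.dom_bool₂ (· && ·)).comp (h1.comp Primrec.fst Primrec.snd)
      (h2.comp Primrec.fst Primrec.snd)).to₂

/-- The partial function whose domain is our simple set. -/
def f : List Bool →. ℕ := fun x => Nat.rfind fun n => Part.some (D x n)

theorem partrec_f : Partrec f :=
  Partrec.rfind ((computable_D.partrec₂).of_eq fun x => rfl)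

/-- The simple set. -/
def S : Set (List Bool) := {x | (f x).Dom}

theorem mem_S_iff {x : List Bool} : x ∈ S ↔ ∃ n, D x n = true := by
  constructor
  · rintro ⟨n, hn⟩
    exact ⟨n, by simpa using hn.1⟩
  · rintro ⟨n, hn⟩
    have : ∃ n, true ∈ (Part.some (D x n) : Part Bool) ∧
        ∀ m < n, ((fun n => Part.some (D x n)) m).Dom := ⟨n, by simpa using hn, fun m _ => trivial⟩
    exact (Nat.rfind_dom.mpr this)

theorem rePred_S : REPred (· ∈ S) := partrec_f.dom_re

theorem noneBelow_iff {e m : ℕ} : NoneBelow e m = true ↔ ∀ j < m, GoodB e j = false := by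
  induction m with
  | zero => simp [NoneBelow]
  | succ j ih =>
    simp only [NoneBelow, Bool.and_eq_true, Bool.not_eq_true'] at ih ⊢
    constructor
    · rintro ⟨h1, h2⟩ k hk
      rcases Nat.lt_succ_iff_lt_or_eq.mp hk with hk | rfl
      · exact ih.mp h1 k hk
      · exact h2
    · intro h
      exact ⟨ih.mpr fun k hk => h k (hk.trans (Nat.lt_succ_self j)), h j (Nat.lt_succ_self j)⟩

theorem goodB_iff {e m : ℕ} : GoodB e m = true ↔
    ∃ x : List Bool, (Encodable.decode m.unpair.1 : Option (List Bool)) = some x ∧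
      2 * e < x.length ∧ (evaln m.unpair.2 (ofNat Code e) (Encodable.encode x)).isSome := by
  unfold GoodB
  cases h : (Encodable.decode m.unpair.1 : Option (List Bool)) with
  | none => simp
  | some x => simp [h]

theorem D_iff {x : List Bool} {n : ℕ} : D x n = true ↔
    GoodB n.unpair.1 n.unpair.2 = true ∧ NoneBelow n.unpair.1 n.unpair.2 = true ∧
      (Encodable.decode n.unpair.2.unpair.1 : Option (List Bool)) = some x := by
  simp [D, and_assoc]

open Classical in
/-- The index map used for counting. -/
noncomputable def E (x : List Bool) : ℕ :=
  if h : ∃ n, D x n = true then (Nat.find h).unpair.1 else 0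

theorem E_spec {x : List Bool} (hx : x ∈ S) :
    ∃ m, GoodB (E x) m = true ∧ NoneBelow (E x) m = true ∧
      (Encodable.decode m.unpair.1 : Option (List Bool)) = some x ∧ 2 * E x < x.length := by
  classical
  have h := mem_S_iff.mp hx
  rw [E]
  rw [dif_pos h]
  have hD := D_iff.mp (Nat.find_spec h)
  refine ⟨(Nat.find h).unpair.2, hD.1, hD.2.1, hD.2.2, ?_⟩
  obtain ⟨y, hy, hlen, -⟩ := goodB_iff.mp hD.1
  rw [hD.2.2] at hy
  cases hy
  exact hlen

theorem least_unique {e m m' : ℕ} (h : GoodB e m = true) (hb : ∀ j < m, GoodB e j = false)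
    (h' : GoodB e m' = true) (hb' : ∀ j < m', GoodB e j = false) : m = m' := by
  rcases lt_trichotomy m m' with hlt | heq | hlt
  · exact absurd h (by simp [hb' m hlt])
  · exact heq
  · exact absurd h' (by simp [hb m' hlt])

theorem E_injOn : Set.InjOn E S := by
  intro x hx y hy hxy
  obtain ⟨m, hg, hnb, hdec, -⟩ := E_spec hx
  obtain ⟨m', hg', hnb', hdec', -⟩ := E_spec hy
  rw [hxy] at hg hnb
  have hm : m = m' := least_unique hg (noneBelow_iff.mp hnb) hg' (noneBelow_iff.mp hnb')
  rw [hm, hdec'] at hdec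
  exact (Option.some.injEq _ _ ▸ hdec).symm ▸ rfl

theorem ncard_S_len_le (n : ℕ) : ({x ∈ S | x.length = n} : Set (List Bool)).ncard ≤ n := by
  have hmem : ∀ x ∈ ({x ∈ S | x.length = n} : Set (List Bool)),
      E x ∈ ((Finset.range n : Finset ℕ) : Set ℕ) := by
    intro x hx
    simp only [Set.mem_setOf_eq] at hx
    obtain ⟨-, -, -, -, hlen⟩ := E_spec hx.1
    have hxn := hx.2
    simp only [Finset.coe_range, Set.mem_Iio]
    omega
  have h := Set.ncard_le_ncard_of_injOn E hmem
    (E_injOn.mono fun x hx => hx.1) (Finset.range n : Finset ℕ).finite_toSet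
  rwa [Set.ncard_coe_finset, Finset.card_range] at h

theorem finite_S_len (n : ℕ) : ({x ∈ S | x.length = n} : Set (List Bool)).Finite :=
  (List.finite_length_eq Bool n).subset fun x hx => hx.2

theorem ncard_len (n : ℕ) : ({x : List Bool | x.length = n}).ncard = 2 ^ n := by
  have e1 : ↥({x : List Bool | x.length = n}) ≃ {x : List Bool // x.length = n} :=
    Equiv.subtypeEquivRight fun _ => Iff.rfl
  have e2 : {x : List Bool // x.length = n} ≃ List.Vector Bool n := Equiv.refl _
  rw [← Nat.card_coe_set_eq, Nat.card_congr (e1.trans e2), Nat.card_eq_fintype_card,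
    card_vector]
  simp

theorem exists_not_mem_len (n : ℕ) : ∃ x : List Bool, x.length = n ∧ x ∉ S := by
  by_contra h
  push_neg at h
  have hsub : {x : List Bool | x.length = n} ⊆ {x ∈ S | x.length = n} := fun x hx =>
    ⟨h x hx, hx⟩
  have := (Set.ncard_le_ncard hsub (finite_S_len n)).trans (ncard_S_len_le n)
  rw [ncard_len] at this
  exact absurd this (by simpa using Nat.lt_two_pow_self (n := n))

theorem compl_infinite : Sᶜ.Infinite := by
  choose g hg1 hg2 using exists_not_mem_len
  exact Set.infinite_of_injective_forall_mem
    (f := g) (fun a b hab => by rw [← hg1 a, ← hg1 b, hab]) fun n => hg2 n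

theorem simple_part : ∀ W : Set (List Bool), REPred (· ∈ W) → W ⊆ Sᶜ → W.Finite := by
  classical
  intro W hW hsub
  by_contra hfin
  have hinf : W.Infinite := hfin
  obtain ⟨c, hc⟩ := Nat.Partrec.Code.exists_code.1 hW
  have hWc : ∀ x : List Bool, x ∈ W ↔ (eval c (Encodable.encode x)).Dom := by
    intro x
    rw [hc]
    simp [Encodable.encodek, Part.assert, Part.Dom]
  set e := Encodable.encode c with he
  have hlong : ∃ x ∈ W, 2 * e < x.length := by
    by_contra hl
    push_neg at hl
    exact hfin ((List.finite_length_le Bool (2 * e)).subset fun x hx => hl x hx)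
  obtain ⟨x, hxW, hxlen⟩ := hlong
  have hdom := (hWc x).mp hxW
  obtain ⟨y0, hy0⟩ := Part.dom_iff_mem.mp hdom
  obtain ⟨k, hk⟩ := evaln_complete.mp hy0
  have hgood : GoodB e (Nat.pair (Encodable.encode x) k) = true := by
    refine goodB_iff.mpr ⟨x, ?_, ?_, ?_⟩
    · simp [Nat.unpair_pair, Encodable.encodek]
    · simpa [Nat.unpair_pair] using hxlen
    · simp only [Nat.unpair_pair, he, Denumerable.ofNat_encode]
      exact Option.isSome_iff_exists.mpr ⟨y0, hk⟩
  have hex : ∃ m, GoodB e m = true := ⟨_, hgood⟩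
  obtain ⟨y, hy, hylen, hyev⟩ := goodB_iff.mp (Nat.find_spec hex)
  have hyS : y ∈ S := by
    refine mem_S_iff.mpr ⟨Nat.pair e (Nat.find hex), D_iff.mpr ⟨?_, ?_, ?_⟩⟩
    · simpa [Nat.unpair_pair] using Nat.find_spec hex
    · simp only [Nat.unpair_pair]
      exact noneBelow_iff.mpr fun j hj => by
        have := Nat.find_min hex hj
        simpa using this
    · simpa [Nat.unpair_pair] using hy
  have hyW : y ∈ W := by
    rw [hWc y]
    obtain ⟨z, hz⟩ := Option.isSome_iff_exists.mp hyev
    have hce : ofNat Code e = c := by rw [he, Denumerable.ofNat_encode]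
    rw [hce] at hz
    exact Part.dom_iff_mem.mpr ⟨z, evaln_sound hz⟩
  exact hsub hyW hyS

theorem tendsto_density :
    Filter.Tendsto (fun n => (Set.ncard {x ∈ S | x.length = n} : ℝ) / 2 ^ n)
      Filter.atTop (nhds 0) := by
  have hlim : Filter.Tendsto (fun n : ℕ => (n : ℝ) / 2 ^ n) Filter.atTop (nhds 0) := by
    have := tendsto_pow_const_mul_const_pow_of_lt_one 1
      (by norm_num : (0:ℝ) ≤ 1/2) (by norm_num : (1:ℝ)/2 < 1)
    refine this.congr fun n => ?_
    rw [pow_one, div_pow, one_pow, mul_one_div]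
  refine squeeze_zero (fun n => by positivity) (fun n => ?_) hlim
  have h1 : (Set.ncard {x ∈ S | x.length = n} : ℝ) ≤ (n : ℝ) := by
    exact_mod_cast ncard_S_len_le n
  gcongr

end SparseSimpleAux


open SparseSimpleAux in
/-- there exists a sparse simple set. -/
theorem exists_sparse_simple_set :
    ∃ S : Set (List Bool), SimpleSet S ∧
      Filter.Tendsto (fun n => (Set.ncard {x ∈ S | x.length = n} : ℝ) / 2 ^ n)
        Filter.atTop (nhds 0) := by
  exact ⟨SparseSimpleAux.S,
    ⟨SparseSimpleAux.rePred_S, SparseSimpleAux.compl_infinite, SparseSimpleAux.simple_part⟩,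
    SparseSimpleAux.tendsto_density⟩
end

section
/- Fix an optimal machine U together with a code c : Nat.Partrec.Code such that U(p) = Nat.Partrec.Code.eval c (encode p) for all p. Define time(p), for p with U(p) defined, as the least k such that Nat.Partrec.Code.evaln k c (encode p) is defined; define the busy beaver function BB(n) = max { time(p) : |p| ≤ n and U(p) is defined } (with BB(n) = 0 if U halts on no string of length ≤ n), and define B(n) = max { m : K_U(m) ≤ n }. Then there is a constant d such that for all n ≥ d: B(n − d) ≤ BB(n) ≤ B(n + d). -/
open Filter

open Nat.Partrec (Code)
open Nat.Partrec.Code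

namespace BBaux

def gN : ℕ → ℕ
  | 0 => 0
  | (N+1) => (gN N + 2)^2 + 1

lemma gN_mono : Monotone gN := by
  apply monotone_nat_of_le_succ
  intro n
  simp only [gN]
  nlinarith [sq_nonneg (gN n)]

lemma pair_le (x y : ℕ) : Nat.pair x y ≤ (x+y)^2 + x + y := by
  unfold Nat.pair
  split <;> nlinarith

lemma encode_bool_le (b : Bool) : Encodable.encode b ≤ 1 := by cases b <;> simp

lemma encode_le_gN (p : List Bool) : Encodable.encode p ≤ gN p.length := by
  induction p with
  | nil => simp [gN]
  | cons a l ih =>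
    have h1 := encode_bool_le a
    have h2 := pair_le (Encodable.encode a) (Encodable.encode l)
    simp only [Encodable.encode_list_cons, List.length_cons, gN]
    have : Nat.pair (Encodable.encode a) (Encodable.encode l) ≤ (1 + gN l.length)^2 + 1 + gN l.length := by
      calc Nat.pair (Encodable.encode a) (Encodable.encode l)
          ≤ (Encodable.encode a + Encodable.encode l)^2 + Encodable.encode a + Encodable.encode l := h2
        _ ≤ (1 + gN l.length)^2 + 1 + gN l.length := by nlinarith
    have h3 : (1 + gN l.length)^2 + 1 + gN l.length + 1 ≤ (gN l.length + 2)^2 + 1 := by nlinarith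
    omega


def Fd (c : Code) (m N : ℕ) : ℕ :=
  (((List.range (gN N + 1)).map (fun e => ((evaln m c e).getD 0))).foldr max 0) + 1

lemma le_foldr_max {l : List ℕ} {x : ℕ} (h : x ∈ l) : x ≤ l.foldr max 0 := by
  induction l with
  | nil => simp at h
  | cons a t ih =>
    rcases List.mem_cons.1 h with h | h
    · subst h; exact le_max_left _ _
    · exact le_trans (ih h) (le_max_right _ _)

lemma lt_Fd {c : Code} {m N v e : ℕ} (hv : v ∈ evaln m c e) (he : e ≤ gN N) :
    v < Fd c m N := by
  have hmem : v ∈ (List.range (gN N + 1)).map (fun e => ((evaln m c e).getD 0)) := by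
    refine List.mem_map.2 ⟨e, List.mem_range.2 (by omega), ?_⟩
    simp [Option.mem_def.1 hv]
  exact Nat.lt_succ_of_le (le_foldr_max hmem)

lemma gN_primrec : Primrec gN := by
  have hf : Primrec (fun M : ℕ => M + 2) :=
    (Primrec.succ.comp Primrec.succ).of_eq (fun n => rfl)
  have h1 : Primrec (fun M : ℕ => (M+2)*(M+2)+1) :=
    Primrec.succ.comp (Primrec.nat_mul.comp hf hf)
  have h : Primrec₂ (fun (_ M : ℕ) => (M+2)*(M+2)+1) := h1.comp Primrec.snd
  have := Primrec.nat_rec₁ (0 : ℕ) h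
  refine this.of_eq (fun n => ?_)
  induction n with
  | zero => rfl
  | succ n ih => simp only [gN, pow_two]; rw [← ih]


lemma Fd_primrec (c : Code) : Primrec₂ (Fd c) := by
  have hev : Primrec₂ (fun (mN : ℕ × ℕ) (e : ℕ) => (evaln mN.1 c e).getD 0) := by
    have h1 : Primrec (fun p : (ℕ × ℕ) × ℕ => evaln p.1.1 c p.2) :=
      primrec_evaln.comp ((Primrec.pair (Primrec.fst.comp Primrec.fst)
        (Primrec.const c)).pair Primrec.snd)
    exact (Primrec.option_getD.comp h1 (Primrec.const 0)).to₂
  have hrange : Primrec (fun mN : ℕ × ℕ => List.range (gN mN.2 + 1)) :=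
    Primrec.list_range.comp (Primrec.succ.comp (gN_primrec.comp Primrec.snd))
  have hmap : Primrec (fun mN : ℕ × ℕ =>
      (List.range (gN mN.2 + 1)).map (fun e => (evaln mN.1 c e).getD 0)) :=
    Primrec.list_map hrange hev
  have hfold : Primrec (fun mN : ℕ × ℕ =>
      ((List.range (gN mN.2 + 1)).map (fun e => (evaln mN.1 c e).getD 0)).foldr max 0) :=
    Primrec.list_foldr hmap (Primrec.const 0)
      ((Primrec.nat_max.comp (Primrec.fst.comp Primrec.snd)
        (Primrec.snd.comp Primrec.snd)).to₂)
  exact (Primrec.succ.comp hfold).to₂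

lemma drop_primrec : Primrec₂ (fun (l : List Bool) (n : ℕ) => l.drop n) := by
  have h : Primrec₂ (fun (l : List Bool) (n : ℕ) =>
      Nat.rec l (fun _ ih => ih.tail) n : List Bool → ℕ → List Bool) :=
    Primrec.nat_rec' Primrec.snd Primrec.fst
      ((Primrec.list_tail.comp (Primrec.snd.comp Primrec.snd)).to₂)
  refine (Primrec.of_eq h ?_)
  rintro ⟨l, n⟩
  induction n with
  | zero => rfl
  | succ n ih =>
    simp only at ih ⊢
    rw [ih]
    exact List.tail_drop

def Vd (c : Code) : List Bool →. ℕ :=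
  fun p => (c.eval (Encodable.encode (p.drop (p.idxOf false + 1)))).map
    (fun m => Fd c m (p.length + p.idxOf false))

lemma Vd_partrec (c : Code) : Partrec (Vd c) := by
  have hidx : Primrec (fun p : List Bool => p.idxOf false) :=
    Primrec.list_idxOf.comp (Primrec.const false) Primrec.id
  have hdrop : Primrec (fun p : List Bool => p.drop (p.idxOf false + 1)) :=
    drop_primrec.comp Primrec.id (Primrec.succ.comp hidx)
  have hf : Partrec (fun p : List Bool => c.eval (Encodable.encode (p.drop (p.idxOf false + 1)))) :=
    eval_part.comp (Computable.const c) (Computable.encode.comp hdrop.to_comp)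
  have hg : Computable₂ (fun (p : List Bool) (m : ℕ) => Fd c m (p.length + p.idxOf false)) :=
    ((Fd_primrec c).comp Primrec.snd
      ((Primrec.nat_add.comp (Primrec.list_length.comp Primrec.fst)
        (hidx.comp Primrec.fst)))).to_comp
  exact hf.map hg

def Vt (c : Code) : List Bool →. ℕ :=
  fun p => Nat.rfind (fun k => Part.some ((evaln k c (Encodable.encode p)).isSome))

lemma Vt_partrec (c : Code) : Partrec (Vt c) := by
  apply Partrec.rfind
  have h : Primrec (fun pk : List Bool × ℕ => (evaln pk.2 c (Encodable.encode pk.1)).isSome) :=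
    Primrec.option_isSome.comp (primrec_evaln.comp
      ((Primrec.pair Primrec.snd (Primrec.const c)).pair
        (Primrec.encode.comp Primrec.fst)))
  exact (Primrec.to_comp h).to₂.partrec₂

end BBaux

section Main

open BBaux

variable {U : List Bool →. ℕ} {c : Code}

lemma KU_le_of_mem {v : ℕ} {p : List Bool} (h : v ∈ U p) : KU U v ≤ (p.length : ℕ∞) :=
  sInf_le ⟨p, h, rfl⟩

lemma KU_le_iff {v N : ℕ} : KU U v ≤ (N : ℕ∞) ↔ ∃ p : List Bool, p.length ≤ N ∧ v ∈ U p := by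
  constructor
  · intro h
    by_contra hn
    push_neg at hn
    have h1 : ((N + 1 : ℕ) : ℕ∞) ≤ KU U v := by
      apply le_sInf
      rintro l ⟨p, hp, rfl⟩
      have h2 : N + 1 ≤ p.length := by
        by_contra hle
        push_neg at hle
        exact hn p (by omega) hp
      exact_mod_cast h2
    have h3 : ((N + 1 : ℕ) : ℕ∞) ≤ (N : ℕ∞) := le_trans h1 h
    have h4 : N + 1 ≤ N := by exact_mod_cast h3
    omega
  · rintro ⟨p, hp, hv⟩
    exact le_trans (KU_le_of_mem hv) (by exact_mod_cast hp)

lemma bddAbove_KUset (N : ℕ) : BddAbove {m : ℕ | KU U m ≤ (N : ℕ∞)} := by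
  apply Set.Finite.bddAbove
  have hsub : {m : ℕ | KU U m ≤ (N : ℕ∞)} ⊆
      ⋃ p ∈ {p : List Bool | p.length ≤ N}, {m | m ∈ U p} := by
    intro m hm
    rcases KU_le_iff.1 hm with ⟨p, h1, h2⟩
    exact Set.mem_biUnion h1 h2
  apply Set.Finite.subset _ hsub
  apply Set.Finite.biUnion (List.finite_length_le Bool N)
  intro p _
  exact Set.Subsingleton.finite (fun a ha b hb => Part.mem_unique ha hb)

lemma le_Bfun {v N : ℕ} (h : KU U v ≤ (N : ℕ∞)) : v ≤ Bfun U N :=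
  le_csSup (bddAbove_KUset N) h

lemma compTime_isSome {p : List Bool} (hc : ∀ p : List Bool, U p = c.eval (Encodable.encode p))
    (h : (U p).Dom) : (Nat.Partrec.Code.evaln (compTime c p) c (Encodable.encode p)).isSome := by
  obtain ⟨v, hv⟩ := Part.dom_iff_mem.1 h
  have hv2 : v ∈ c.eval (Encodable.encode p) := by rw [← hc]; exact hv
  rcases Nat.Partrec.Code.evaln_complete.1 hv2 with ⟨k, hk⟩
  have hne : ({k' : ℕ | (Nat.Partrec.Code.evaln k' c (Encodable.encode p)).isSome}).Nonempty :=
    ⟨k, by simp only [Set.mem_setOf_eq, Option.isSome_iff_exists]; exact ⟨_, hk⟩⟩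
  exact Nat.sInf_mem hne

lemma mem_evaln_of_compTime_le {p : List Bool} {v m : ℕ}
    (hc : ∀ p : List Bool, U p = c.eval (Encodable.encode p))
    (hv : v ∈ U p) (hm : compTime c p ≤ m) :
    v ∈ Nat.Partrec.Code.evaln m c (Encodable.encode p) := by
  have hd : (U p).Dom := Part.dom_iff_mem.2 ⟨v, hv⟩
  obtain ⟨w, hw⟩ := Option.isSome_iff_exists.1 (compTime_isSome hc hd)
  have hw' : w ∈ c.eval (Encodable.encode p) := Nat.Partrec.Code.evaln_sound hw
  have hwv : w = v := Part.mem_unique hw' (by rw [← hc]; exact hv)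
  subst hwv
  exact Nat.Partrec.Code.evaln_mono hm hw

lemma bddAbove_BBset (n : ℕ) :
    BddAbove {t : ℕ | ∃ p : List Bool, p.length ≤ n ∧ (U p).Dom ∧ t = compTime c p} := by
  apply Set.Finite.bddAbove
  apply Set.Finite.subset ((List.finite_length_le Bool n).image (compTime c))
  rintro t ⟨p, h1, _, rfl⟩
  exact ⟨p, h1, rfl⟩

lemma compTime_le_BB {p : List Bool} {n : ℕ} (h1 : p.length ≤ n) (h2 : (U p).Dom) :
    compTime c p ≤ BB U c n :=
  le_csSup (bddAbove_BBset n) ⟨p, h1, h2, rfl⟩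

lemma indexOf_replicate (k : ℕ) (q : List Bool) :
    ((List.replicate k true ++ [false]) ++ q).idxOf false = k := by
  induction k with
  | zero => simp
  | succ k ih =>
    rw [List.replicate_succ]
    simpa using ih

end Main

/-- the busy beaver function of an optimal machine coincides, up to an
`O(1)` shift of the argument, with the largest number of complexity at most `n`. -/
theorem busy_beaver_vs_B (U : List Bool →. ℕ) (hU : OptimalMachine U)
    (c : Nat.Partrec.Code)
    (hc : ∀ p : List Bool, U p = c.eval (Encodable.encode p)) :
    ∃ d : ℕ, ∀ n ≥ d, Bfun U (n - d) ≤ BB U c n ∧ BB U c n ≤ Bfun U (n + d) := by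
  classical
  obtain ⟨hUpart, hopt⟩ := hU
  obtain ⟨dV, hdV⟩ := hopt (BBaux.Vd c) (BBaux.Vd_partrec c)
  obtain ⟨dT, hdT⟩ := hopt (BBaux.Vt c) (BBaux.Vt_partrec c)
  set D : ℕ := 2 * dV + dT + 1 with hD
  refine ⟨D, fun n hn => ⟨?_, ?_⟩⟩
  · -- hard direction: Bfun U (n - D) ≤ BB U c n
    apply csSup_le'
    rintro m hm
    simp only [Set.mem_setOf_eq] at hm
    by_contra hgt
    push_neg at hgt
    have hgt' : BB U c n < m := hgt
    obtain ⟨q₀, hq₀len, hq₀⟩ := KU_le_iff.1 hm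
    set p : List Bool := (List.replicate dV true ++ [false]) ++ q₀ with hp
    have hidx : p.idxOf false = dV := indexOf_replicate dV q₀
    have hdrop : p.drop (dV + 1) = q₀ := by
      rw [hp]
      have : (List.replicate dV true ++ [false]).length = dV + 1 := by simp
      rw [← this, List.drop_left]
    have hplen : p.length = q₀.length + dV + 1 := by simp [hp]; omega
    set N : ℕ := p.length + dV with hN
    have hNn : N ≤ n := by
      have : q₀.length ≤ n - D := hq₀len
      omega
    set o : ℕ := BBaux.Fd c m N with ho
    have hVp : o ∈ BBaux.Vd c p := by
      rw [BBaux.Vd]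
      simp only [hidx, hdrop]
      exact Part.mem_map _ (by rw [← hc]; exact hq₀)
    -- every v of complexity ≤ N is < o
    have hsmall : ∀ v : ℕ, KU U v ≤ (N : ℕ∞) → v < o := by
      intro v hvN
      obtain ⟨r, hrlen, hrv⟩ := KU_le_iff.1 hvN
      have hct : compTime c r ≤ m :=
        le_of_lt (lt_of_le_of_lt (compTime_le_BB (le_trans hrlen hNn)
          (Part.dom_iff_mem.2 ⟨v, hrv⟩)) hgt')
      have hev : v ∈ Nat.Partrec.Code.evaln m c (Encodable.encode r) :=
        mem_evaln_of_compTime_le hc hrv hct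
      exact BBaux.lt_Fd hev (le_trans (BBaux.encode_le_gN r) (BBaux.gN_mono hrlen))
    have hKo : ¬ KU U o ≤ (N : ℕ∞) := fun h => lt_irrefl o (hsmall o h)
    have hKV : KU (BBaux.Vd c) o ≤ (p.length : ℕ∞) := KU_le_of_mem hVp
    have hKU : KU U o ≤ (N : ℕ∞) := by
      calc KU U o ≤ KU (BBaux.Vd c) o + (dV : ℕ∞) := hdV o
        _ ≤ (p.length : ℕ∞) + (dV : ℕ∞) := by exact add_le_add_left hKV _
        _ = (N : ℕ∞) := by rw [hN]; push_cast; ring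
    exact hKo hKU
  · -- easy direction: BB U c n ≤ Bfun U (n + D)
    apply csSup_le'
    rintro t ⟨p, hplen, hdom, rfl⟩
    have hmem : compTime c p ∈ BBaux.Vt c p := by
      rw [BBaux.Vt]
      refine Nat.mem_rfind.2 ⟨?_, fun {j} hj => ?_⟩
      · exact Part.mem_some_iff.2 (compTime_isSome hc hdom).symm
      · refine Part.mem_some_iff.2 ?_
        have hj' : j ∉ {k' : ℕ | (Nat.Partrec.Code.evaln k' c (Encodable.encode p)).isSome} :=
          Nat.notMem_of_lt_sInf hj
        simp only [Set.mem_setOf_eq] at hj'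
        simp [hj']
    have hKV : KU (BBaux.Vt c) (compTime c p) ≤ (p.length : ℕ∞) := KU_le_of_mem hmem
    have hKU : KU U (compTime c p) ≤ ((n + D : ℕ) : ℕ∞) := by
      calc KU U (compTime c p) ≤ KU (BBaux.Vt c) (compTime c p) + (dT : ℕ∞) := hdT _
        _ ≤ (p.length : ℕ∞) + (dT : ℕ∞) := add_le_add_left hKV _
        _ ≤ ((n + D : ℕ) : ℕ∞) := by
            have h1 : p.length + dT ≤ n + D := by omega
            calc (p.length : ℕ∞) + (dT : ℕ∞) = ((p.length + dT : ℕ) : ℕ∞) := by push_cast; ring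
              _ ≤ ((n + D : ℕ) : ℕ∞) := by exact_mod_cast h1
    exact le_Bfun hKU
end

section
/- Fix an optimal machine U together with a code c : Nat.Partrec.Code such that U(p) = Nat.Partrec.Code.eval c (encode p) for all p; define time(p) and BB(n) as the busy beaver data of U. Fix an optimal prefix machine defining KP(n). Then there is a constant d such that for all n, all k ≤ n and all t: if the number of strings p with |p| ≤ n, U(p) defined and time(p) > t is strictly greater than 2^{n−k}, then t ≤ BB(k + KP(n) + d). -/
open Filter

/-- A prefix machine: its domain is prefix-free. -/
def PrefixMachine (M : List Bool →. ℕ) : Prop :=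
  Partrec M ∧ ∀ p q : List Bool, (M p).Dom → (M q).Dom → p <+: q → p = q

/-- Prefix complexity of `n` with respect to `M`. -/
noncomputable def KPm (M : List Bool →. ℕ) (n : ℕ) : ℕ∞ :=
  sInf {l : ℕ∞ | ∃ p : List Bool, n ∈ M p ∧ (p.length : ℕ∞) = l}

/-- `M` is an optimal prefix machine. -/
def OptimalPrefix (M : List Bool →. ℕ) : Prop :=
  PrefixMachine M ∧ ∀ M' : List Bool →. ℕ, PrefixMachine M' →
    ∃ c : ℕ, ∀ n : ℕ, KPm M n ≤ KPm M' n + (c : ℕ∞)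


open Nat.Partrec (Code)
open Nat.Partrec.Code

namespace BBaux

/-- all binary strings of length ≤ n -/
def strs : ℕ → List (List Bool)
  | 0 => [[]]
  | n+1 => [] :: ((strs n).map (true :: ·) ++ (strs n).map (false :: ·))

theorem mem_strs : ∀ n (x : List Bool), x ∈ strs n ↔ x.length ≤ n
  | 0, x => by cases x <;> simp [strs]
  | n+1, x => by
    cases x with
    | nil => simp [strs]
    | cons b l =>
      have ih := mem_strs n l
      cases b <;> simp_all [strs] <;> omega

theorem nodup_strs : ∀ n, (strs n).Nodup
  | 0 => by simp [strs]
  | n+1 => by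
    have ih := nodup_strs n
    simp only [strs, List.nodup_cons, List.mem_append, List.mem_map]
    refine ⟨by simp, List.Nodup.append (ih.map (fun a b h => by simpa using h))
      (ih.map (fun a b h => by simpa using h)) ?_⟩
    intro x hx hy
    simp only [List.mem_map] at hx hy
    obtain ⟨a, _, rfl⟩ := hx
    obtain ⟨b, _, h⟩ := hy
    simp at h

theorem length_strs : ∀ n, (strs n).length + 1 = 2^(n+1)
  | 0 => by simp [strs]
  | n+1 => by
    have ih := length_strs n
    simp only [strs, List.length_cons, List.length_append, List.length_map]
    ring_nf
    ring_nf at ih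
    omega

theorem primrec_strs : Primrec strs := by
  have hstep : Primrec (fun L : List (List Bool) =>
      ([] : List Bool) :: (L.map (true :: ·) ++ L.map (false :: ·))) := by
    have hm : ∀ b : Bool, Primrec₂ (fun (_ : List (List Bool)) (l : List Bool) => b :: l) :=
      fun b => Primrec.list_cons.comp (Primrec.const b) Primrec.snd
    exact Primrec.list_cons.comp (Primrec.const ([] : List Bool))
      (Primrec.list_append.comp (Primrec.list_map .id (hm true))
        (Primrec.list_map .id (hm false)))
  have : Primrec₂ (fun (_ : ℕ) (IH : List (List Bool)) =>
      ([] : List Bool) :: (IH.map (true :: ·) ++ IH.map (false :: ·))) :=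
    hstep.comp Primrec.snd
  exact (Primrec.nat_rec₁ [[]] this).of_eq fun n => by
    induction n with
    | zero => simp [strs]
    | succ n ih => simp [strs, ih]

/-- value of a binary string -/
def bval : List Bool → ℕ
  | [] => 0
  | b :: w => (bif b then 1 else 0) + 2 * bval w

theorem bval_lt : ∀ w : List Bool, bval w < 2 ^ w.length
  | [] => by simp [bval]
  | b :: w => by
    have := bval_lt w
    cases b <;> simp [bval, pow_succ] <;> omega

theorem primrec_bval : Primrec bval := by
  have : Primrec₂ (fun (_ : List Bool) (p : Bool × ℕ) => (bif p.1 then 1 else 0) + 2 * p.2) := by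
    refine Primrec.nat_add.comp ?_ ?_
    · exact (Primrec.cond (Primrec.fst.comp Primrec.snd) (Primrec.const 1) (Primrec.const 0))
    · exact Primrec.nat_mul.comp (Primrec.const 2) (Primrec.snd.comp Primrec.snd)
  exact (Primrec.list_foldr .id (Primrec.const 0) this).of_eq fun l => by
    induction l with
    | nil => simp [bval]
    | cons b w ih => simpa [bval] using ih

/-- binary digits -/
def bits : ℕ → ℕ → List Bool
  | 0, _ => []
  | L+1, a => (a % 2 == 1) :: bits L (a / 2)

theorem length_bits : ∀ L a, (bits L a).length = L
  | 0, _ => rfl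
  | L+1, a => by simp [bits, length_bits L]

theorem bval_bits : ∀ L a, a < 2 ^ L → bval (bits L a) = a
  | 0, a, h => by simpa [bits, bval] using by omega
  | L+1, a, h => by
    have h2 : a / 2 < 2 ^ L := by
      rw [pow_succ] at h; omega
    have := bval_bits L (a / 2) h2
    simp only [bits, bval, this]
    rcases Nat.even_or_odd a with he | ho
    · have : a % 2 = 0 := Nat.even_iff.1 he
      simp [this]; omega
    · have : a % 2 = 1 := Nat.odd_iff.1 ho
      simp [this]; omega

/-- a bound on outputs of `evaln k c` -/
def outBound : Code → ℕ → ℕ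
  | Code.pair cf cg, k => (outBound cf k + outBound cg k + 1) ^ 2
  | Code.comp cf _, k => outBound cf k
  | Code.prec cf cg, k => max (outBound cf k) (outBound cg k)
  | _, k => k

theorem pair_le_sq (a b : ℕ) : Nat.pair a b ≤ (a + b + 1) ^ 2 := by
  rw [Nat.pair]
  split <;> nlinarith

theorem outBound_mono (c : Code) : Monotone (outBound c) := by
  induction c with
  | pair cf cg ihf ihg =>
    intro a b h
    simp only [outBound]
    exact Nat.pow_le_pow_left (by have := ihf h; have := ihg h; omega) 2
  | comp cf cg ihf ihg => exact fun a b h => ihf h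
  | prec cf cg ihf ihg => exact fun a b h => max_le_max (ihf h) (ihg h)
  | _ => exact fun a b h => by simpa [outBound] using h

theorem primrec_outBound (c : Code) : Primrec (outBound c) := by
  induction c with
  | pair cf cg ihf ihg =>
    simp only [outBound]
    have hpow : Primrec₂ (fun a b : ℕ => a ^ b) := Primrec₂.unpaired'.mp Nat.Primrec.pow
    exact hpow.comp (Primrec.nat_add.comp (Primrec.nat_add.comp ihf ihg) (Primrec.const 1))
      (Primrec.const 2)
  | comp cf cg ihf ihg => exact ihf
  | prec cf cg ihf ihg => exact Primrec.nat_max.comp ihf ihg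
  | _ => exact Primrec.id

theorem mem_guard {n k : ℕ} {o : Option ℕ} {x : ℕ}
    (h : x ∈ (do { guard (n ≤ k); o } : Option ℕ)) : n ≤ k ∧ x ∈ o := by
  simp only [Option.mem_def, Bind.bind, Option.bind_eq_some_iff, Option.guard_eq_some', exists_and_left,
    exists_const] at h
  exact h

theorem evaln_le_outBound : ∀ {k : ℕ} {c : Code} {n x : ℕ},
    x ∈ evaln k c n → x ≤ outBound c k
  | 0, c, n, x, h => by simp [evaln] at h
  | k + 1, c, n, x, h => by
    induction c generalizing x n with
    | zero =>
      rw [evaln] at h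
      obtain ⟨hn, hx⟩ := mem_guard h
      simp only [Option.pure_def, Option.mem_def, Option.some_inj] at hx
      subst hx
      simp [outBound]
    | succ =>
      rw [evaln] at h
      obtain ⟨hn, hx⟩ := mem_guard h
      simp only [Option.pure_def, Option.mem_def, Option.some_inj] at hx
      subst hx
      simp only [outBound]
      omega
    | left =>
      rw [evaln] at h
      obtain ⟨hn, hx⟩ := mem_guard h
      simp only [Option.pure_def, Option.mem_def, Option.some_inj] at hx
      subst hx
      have := Nat.unpair_left_le n
      simp only [outBound]
      omega
    | right =>
      rw [evaln] at h
      obtain ⟨hn, hx⟩ := mem_guard h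
      simp only [Option.pure_def, Option.mem_def, Option.some_inj] at hx
      subst hx
      have := Nat.unpair_right_le n
      simp only [outBound]
      omega
    | pair cf cg ihf ihg =>
      rw [evaln] at h
      obtain ⟨hn, hx⟩ := mem_guard h
      simp only [Seq.seq, Option.map_eq_map, Option.mem_def, Option.bind_eq_some_iff,
        Option.map_eq_some_iff, exists_exists_and_eq_and] at hx
      obtain ⟨a, ha, b, hb, rfl⟩ := hx
      have h1 := ihf _ _ ha
      have h2 := ihg _ _ hb
      calc Nat.pair a b ≤ (a + b + 1) ^ 2 := pair_le_sq a b
        _ ≤ (outBound cf (k+1) + outBound cg (k+1) + 1) ^ 2 := by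
          have := Nat.pow_le_pow_left (show a + b + 1 ≤ outBound cf (k+1) + outBound cg (k+1) + 1 by omega) 2
          exact this
        _ = outBound (cf.pair cg) (k+1) := rfl
    | comp cf cg ihf ihg =>
      rw [evaln] at h
      obtain ⟨hn, hx⟩ := mem_guard h
      simp only [Option.mem_def, Bind.bind, Option.bind_eq_some_iff] at hx
      obtain ⟨y, hy, hx⟩ := hx
      exact ihf _ _ hx
    | prec cf cg ihf ihg =>
      rw [evaln] at h
      obtain ⟨hn, hx⟩ := mem_guard h
      simp only [Nat.unpaired, Option.mem_def] at hx
      rcases hy : n.unpair.2 with - | y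
      · rw [hy] at hx
        simp only [Nat.rec_zero] at hx
        exact le_trans (ihf _ _ hx) (le_max_left _ _)
      · rw [hy] at hx
        simp only [Bind.bind, Option.bind_eq_some_iff] at hx
        obtain ⟨i, hi, hx⟩ := hx
        exact le_trans (ihg _ _ hx) (le_max_right _ _)
    | rfind' cf ihf =>
      rw [evaln] at h
      obtain ⟨hn, hx⟩ := mem_guard h
      simp only [Nat.unpaired, Option.mem_def, Bind.bind, Option.bind_eq_some_iff] at hx
      obtain ⟨z, hz, hx⟩ := hx
      by_cases z0 : z = 0
      · simp only [z0, if_true, Option.pure_def, Option.some_inj] at hx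
        subst hx
        have := Nat.unpair_right_le n
        simp only [outBound]
        omega
      · simp only [if_neg z0] at hx
        have := evaln_le_outBound hx
        simp only [outBound] at this ⊢
        omega

/-- number of strings of length ≤ n on which code c halts within j steps -/
def cnt (c : Code) (n j : ℕ) : ℕ :=
  ((strs n).filter (fun p => (evaln j c (Encodable.encode p)).isSome)).length

theorem primrec_cnt (c : Code) : Primrec₂ (cnt c) := by
  have hev : Primrec₂ (fun (j : ℕ) (e : ℕ) => evaln j c e) :=
    (primrec_evaln.comp (((Primrec.fst.pair (Primrec.const c)).pair Primrec.snd))).to₂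
  have hh : Primrec₂ (fun (a : ℕ × ℕ) (p : List Bool × ℕ) =>
      (bif (evaln a.2 c (Encodable.encode p.1)).isSome then 1 else 0) + p.2) := by
    refine Primrec.nat_add.comp ?_ (Primrec.snd.comp Primrec.snd)
    refine Primrec.cond ?_ (Primrec.const 1) (Primrec.const 0)
    exact Primrec.option_isSome.comp (hev.comp (Primrec.snd.comp Primrec.fst)
      (Primrec.encode.comp (Primrec.fst.comp Primrec.snd)))
  have := Primrec.list_foldr (primrec_strs.comp (Primrec.fst (β := ℕ)))
    (Primrec.const 0) hh
  refine this.to₂.of_eq fun n j => ?_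
  show _ = cnt c n j
  unfold cnt
  generalize strs n = l
  induction l with
  | nil => simp
  | cons p l ih =>
    simp only [List.foldr_cons, List.filter_cons]
    cases h : (evaln j c (Encodable.encode p)).isSome
    · simpa [h] using ih
    · simp [h, ih]; omega

/-- all splittings of a string -/
def splits : List Bool → List (List Bool × List Bool)
  | [] => [([], [])]
  | a :: l => ([], a :: l) :: (splits l).map (fun pr => (a :: pr.1, pr.2))

theorem mem_splits : ∀ (q : List Bool) (pr : List Bool × List Bool),
    pr ∈ splits q ↔ pr.1 ++ pr.2 = q
  | [], pr => by
    obtain ⟨x, y⟩ := pr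
    cases x <;> simp [splits]
  | a :: l, pr => by
    obtain ⟨x, y⟩ := pr
    cases x with
    | nil => simp [splits]
    | cons b x =>
      have hl := mem_splits l (x, y)
      simp only [splits, List.mem_cons, List.mem_map, Prod.mk.injEq, List.cons_append,
        List.cons.injEq] at hl ⊢
      constructor
      · rintro (⟨h1, -⟩ | ⟨⟨u, v⟩, hu, ⟨h1, h2⟩, h3⟩)
        · simp at h1
        · subst h1; subst h2; subst h3
          exact ⟨rfl, hl.1 hu⟩
      · rintro ⟨rfl, h⟩
        exact Or.inr ⟨(x, y), hl.2 h, ⟨rfl, rfl⟩, rfl⟩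

theorem primrec_splits : Primrec splits := by
  have hh : Primrec₂ (fun (a : List Bool) (p : Bool × List Bool × List (List Bool × List Bool)) =>
      (([] : List Bool), p.1 :: p.2.1) :: p.2.2.map (fun pr => (p.1 :: pr.1, pr.2))) := by
    refine Primrec.list_cons.comp ?_ ?_
    · exact (Primrec.const ([] : List Bool)).pair
        (Primrec.list_cons.comp (Primrec.fst.comp Primrec.snd)
          (Primrec.fst.comp (Primrec.snd.comp Primrec.snd)))
    · refine Primrec.list_map (Primrec.snd.comp (Primrec.snd.comp Primrec.snd)) ?_
      exact ((Primrec.list_cons.comp (Primrec.fst.comp (Primrec.snd.comp Primrec.fst))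
        (Primrec.fst.comp Primrec.snd)).pair (Primrec.snd.comp Primrec.snd)).to₂
  exact (Primrec.list_rec .id (Primrec.const [(([] : List Bool), ([] : List Bool))]) hh).of_eq
    fun l => by
      induction l with
      | nil => simp [splits]
      | cons a l ih =>
        simp at ih ⊢
        simp [splits, ih]

/-- the inner test of the search machine -/
def inner (c cM : Code) (j : ℕ) (pr : List Bool × List Bool) : Bool :=
  match evaln j cM (Encodable.encode pr.1) with
  | none => false
  | some n => decide (1 ≤ pr.2.length) && decide (pr.2.length ≤ n + 1) &&
      decide (bval pr.2 * 2 ^ (n + 1 - pr.2.length) ≤ cnt c n j)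

theorem primrec_inner (c cM : Code) : Primrec₂ (inner c cM) := by
  have hev : Primrec (fun (a : ℕ × (List Bool × List Bool)) =>
      evaln a.1 cM (Encodable.encode a.2.1)) :=
    primrec_evaln.comp ((Primrec.fst.pair (Primrec.const cM)).pair
      (Primrec.encode.comp (Primrec.fst.comp Primrec.snd)))
  have hpow : Primrec₂ (fun a b : ℕ => a ^ b) := Primrec₂.unpaired'.mp Nat.Primrec.pow
  have hy : Primrec (fun (x : (ℕ × (List Bool × List Bool)) × ℕ) => x.1.2.2) :=
    Primrec.snd.comp (Primrec.snd.comp Primrec.fst)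
  have hn : Primrec (fun (x : (ℕ × (List Bool × List Bool)) × ℕ) => x.2) := Primrec.snd
  have hj : Primrec (fun (x : (ℕ × (List Bool × List Bool)) × ℕ) => x.1.1) :=
    Primrec.fst.comp Primrec.fst
  have hlen : Primrec (fun (x : (ℕ × (List Bool × List Bool)) × ℕ) => x.1.2.2.length) :=
    Primrec.list_length.comp hy
  have h1 : Primrec (fun (x : (ℕ × (List Bool × List Bool)) × ℕ) =>
      decide (1 ≤ x.1.2.2.length)) := (Primrec.nat_le.decide.comp (Primrec.const 1) hlen)
  have h2 : Primrec (fun (x : (ℕ × (List Bool × List Bool)) × ℕ) =>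
      decide (x.1.2.2.length ≤ x.2 + 1)) :=
    (Primrec.nat_le.decide.comp hlen (Primrec.succ.comp hn))
  have h3 : Primrec (fun (x : (ℕ × (List Bool × List Bool)) × ℕ) =>
      decide (bval x.1.2.2 * 2 ^ (x.2 + 1 - x.1.2.2.length) ≤ cnt c x.2 x.1.1)) := by
    refine Primrec.nat_le.decide.comp ?_ ?_
    · exact Primrec.nat_mul.comp (primrec_bval.comp hy)
        (hpow.comp (Primrec.const 2) (Primrec.nat_sub.comp (Primrec.succ.comp hn) hlen))
    · exact (primrec_cnt c).comp hn hj
  have hbody : Primrec (fun (x : (ℕ × (List Bool × List Bool)) × ℕ) =>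
      (decide (1 ≤ x.1.2.2.length) && decide (x.1.2.2.length ≤ x.2 + 1) &&
        decide (bval x.1.2.2 * 2 ^ (x.2 + 1 - x.1.2.2.length) ≤ cnt c x.2 x.1.1))) :=
    (Primrec.dom_bool₂ (· && ·)).comp ((Primrec.dom_bool₂ (· && ·)).comp h1 h2) h3
  have := Primrec.option_casesOn hev (Primrec.const false) hbody.to₂
  refine this.to₂.of_eq fun j pr => ?_
  rcases h : evaln j cM (Encodable.encode pr.1) with - | n <;> simp [inner, h]

/-- the search predicate of the machine Vm -/
def checkb (c cM : Code) (j : ℕ) (q : List Bool) : Bool :=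
  (splits q).any (inner c cM j)

theorem primrec_checkb (c cM : Code) : Primrec₂ (checkb c cM) := by
  have hh : Primrec₂ (fun (a : ℕ × List Bool) (p : (List Bool × List Bool) × Bool) =>
      (inner c cM a.1 p.1 || p.2)) := by
    refine Primrec.dom_bool₂ _ |>.comp ?_ (Primrec.snd.comp Primrec.snd)
    exact (primrec_inner c cM).comp (Primrec.fst.comp Primrec.fst) (Primrec.fst.comp Primrec.snd)
  have := Primrec.list_foldr (primrec_splits.comp (Primrec.snd (α := ℕ)))
    (Primrec.const false) hh
  refine this.to₂.of_eq fun j q => ?_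
  show _ = checkb c cM j q
  unfold checkb
  generalize splits q = L
  induction L with
  | nil => simp
  | cons pr L ih => simp [List.any_cons, ih]

/-- the auxiliary machine -/
def Vm (c cM : Code) : List Bool →. ℕ :=
  fun q => (Nat.rfind (fun j => Part.some (checkb c cM j q))).map (fun j => outBound c j + 1)

theorem partrec_Vm (c cM : Code) : Partrec (Vm c cM) := by
  have h1 : Computable₂ (fun (q : List Bool) (j : ℕ) => checkb c cM j q) :=
    (((primrec_checkb c cM).comp (Primrec.snd (α := List Bool)) Primrec.fst).to_comp).to₂
  have h2 : Partrec₂ (fun (q : List Bool) (j : ℕ) => (Part.some (checkb c cM j q) : Part Bool)) :=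
    h1.partrec₂
  have h3 : Computable₂ (fun (_ : List Bool) (j : ℕ) => outBound c j + 1) :=
    ((Primrec.succ.comp ((primrec_outBound c).comp (Primrec.snd (α := List Bool)))).to_comp).to₂
  exact ((Partrec.rfind h2).map h3).of_eq fun q => rfl

/-! ### complexity extraction lemmas -/

theorem exists_short {F : List Bool →. ℕ} {m : ℕ} {N : ℕ}
    (h : sInf {l : ℕ∞ | ∃ p : List Bool, m ∈ F p ∧ (p.length : ℕ∞) = l} ≤ (N : ℕ∞)) :
    ∃ p : List Bool, m ∈ F p ∧ p.length ≤ N := by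
  by_contra hcon
  push_neg at hcon
  have : ((N : ℕ∞) + 1) ≤ sInf {l : ℕ∞ | ∃ p : List Bool, m ∈ F p ∧ (p.length : ℕ∞) = l} := by
    refine le_sInf fun l hl => ?_
    obtain ⟨p, hp, rfl⟩ := hl
    have := hcon p hp
    exact_mod_cast Nat.succ_le_of_lt this
  have h2 : ((N : ℕ∞) + 1) ≤ (N : ℕ∞) := le_trans this h
  exact absurd h2 (by exact_mod_cast Nat.not_succ_le_self N)

theorem sInf_le_len {F : List Bool →. ℕ} {m : ℕ} {p : List Bool} (h : m ∈ F p) :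
    sInf {l : ℕ∞ | ∃ p : List Bool, m ∈ F p ∧ (p.length : ℕ∞) = l} ≤ (p.length : ℕ∞) :=
  sInf_le ⟨p, h, rfl⟩

/-! ### counting bridge -/

theorem finite_len_le (n : ℕ) : {x : List Bool | x.length ≤ n}.Finite := by
  have : {x : List Bool | x.length ≤ n} = ((strs n).toFinset : Set (List Bool)) := by
    ext x; simp [mem_strs]
  rw [this]
  exact (strs n).toFinset.finite_toSet

theorem ncard_eq_filter_length (n : ℕ) (P : List Bool → Bool) :
    {x : List Bool | x.length ≤ n ∧ P x}.ncard = ((strs n).filter P).length := by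
  have h1 : {x : List Bool | x.length ≤ n ∧ P x} = (((strs n).filter P).toFinset : Set _) := by
    ext x; simp [List.mem_filter, mem_strs]
  rw [h1, Set.ncard_coe_finset, List.toFinset_card_of_nodup ((nodup_strs n).filter P)]

theorem ncard_len_le (n : ℕ) : {x : List Bool | x.length ≤ n}.ncard + 1 = 2 ^ (n + 1) := by
  have h1 : {x : List Bool | x.length ≤ n} = ((strs n).toFinset : Set (List Bool)) := by
    ext x; simp [mem_strs]
  rw [h1, Set.ncard_coe_finset, List.toFinset_card_of_nodup (nodup_strs n), length_strs]

theorem cnt_eq_ncard (c : Code) (n j : ℕ) :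
    cnt c n j = {x : List Bool | x.length ≤ n ∧ (evaln j c (Encodable.encode x)).isSome}.ncard :=
  (ncard_eq_filter_length n _).symm

/-! ### compTime -/

theorem compTime_isSome {c : Code} {p : List Bool} (h : (eval c (Encodable.encode p)).Dom) :
    (evaln (compTime c p) c (Encodable.encode p)).isSome := by
  obtain ⟨x, hx⟩ := Part.dom_iff_mem.1 h
  obtain ⟨K, hK⟩ := (evaln_complete.1 hx)
  have hne : {k : ℕ | (evaln k c (Encodable.encode p)).isSome}.Nonempty :=
    ⟨K, by simp [Option.isSome_iff_exists]; exact ⟨x, hK⟩⟩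
  exact Nat.sInf_mem hne

theorem compTime_le_iff {c : Code} {p : List Bool} (h : (eval c (Encodable.encode p)).Dom)
    {j : ℕ} : compTime c p ≤ j ↔ (evaln j c (Encodable.encode p)).isSome := by
  constructor
  · intro hle
    have h1 := compTime_isSome h
    obtain ⟨x, hx⟩ := Option.isSome_iff_exists.1 h1
    exact Option.isSome_iff_exists.2 ⟨x, evaln_mono hle hx⟩
  · intro hs
    exact Nat.sInf_le (show j ∈ {k : ℕ | (evaln k c (Encodable.encode p)).isSome} from hs)

/-! ### the unary prefix machine -/

def M1 : List Bool →. ℕ := fun p =>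
  (Nat.rfind ↑(fun _ : ℕ => (decide (p = List.replicate (p.length - 1) true ++ [false]) : Bool))).map
    (fun _ => p.length - 1)

theorem partrec_M1 : Partrec M1 := by
  have h1 : Primrec (fun p : List Bool => List.replicate (p.length - 1) true) := by
    have := Primrec.list_map
      (Primrec.list_range.comp (Primrec.pred.comp Primrec.list_length))
      (Primrec₂.const (true : Bool) : Primrec₂ fun (_ : List Bool) (_ : ℕ) => (true : Bool))
    exact this.of_eq fun p => by simp [List.map_const']
  have hrep : Primrec (fun p : List Bool => List.replicate (p.length - 1) true ++ [false]) :=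
    Primrec.list_append.comp h1 (Primrec.const [false])
  have hcond : Computable₂ (fun (p : List Bool) (_ : ℕ) =>
      (decide (p = List.replicate (p.length - 1) true ++ [false]) : Bool)) := by
    have : Primrec (fun p : List Bool =>
        (decide (p = List.replicate (p.length - 1) true ++ [false]) : Bool)) :=
      Primrec.eq.decide.comp .id hrep
    exact (this.comp (Primrec.fst (β := ℕ))).to_comp.to₂
  have h2 : Partrec₂ (fun (p : List Bool) (j : ℕ) =>
      (Part.some ((decide (p = List.replicate (p.length - 1) true ++ [false]) : Bool)) : Part Bool)) :=
    hcond.partrec₂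
  have h3 : Computable₂ (fun (p : List Bool) (_ : ℕ) => p.length - 1) :=
    ((Primrec.pred.comp (Primrec.list_length.comp (Primrec.fst (β := ℕ)))).to_comp).to₂
  exact ((Partrec.rfind h2).map h3).of_eq fun q => rfl

theorem M1_dom {p : List Bool} (h : (M1 p).Dom) :
    p = List.replicate (p.length - 1) true ++ [false] := by
  simp only [M1, Part.map_Dom] at h
  obtain ⟨j, hj, -⟩ := Nat.rfind_dom.1 h
  simpa using hj

theorem M1_mem (n : ℕ) : n ∈ M1 (List.replicate n true ++ [false]) := by
  set p := List.replicate n true ++ [false] with hp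
  have hlen : p.length = n + 1 := by simp [hp]
  have hcond : (decide (p = List.replicate (p.length - 1) true ++ [false]) : Bool) = true := by
    rw [hp]
    simp
  obtain ⟨j, hj, hj0⟩ := Nat.rfind_min'
    (p := fun _ : ℕ => decide (p = List.replicate (p.length - 1) true ++ [false]))
    (m := 0) (by rw [hcond])
  refine Part.mem_map_iff _ |>.2 ⟨j, hj, ?_⟩
  simp [hlen]

theorem prefixFree_M1 : ∀ p q : List Bool, (M1 p).Dom → (M1 q).Dom → p <+: q → p = q := by
  intro p q hp hq hpre
  have hp' := M1_dom hp
  have hq' := M1_dom hq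
  set a := p.length - 1
  set b := q.length - 1
  have hpl : p.length = a + 1 := by rw [hp']; simp
  have hql : q.length = b + 1 := by rw [hq']; simp
  have hab : a ≤ b := by
    have := hpre.length_le
    omega
  rcases Nat.lt_or_ge a b with hlt | hge
  · exfalso
    have hia : a < p.length := by omega
    have hget := hpre.getElem hia
    have h1 : p[a]'hia = false := by
      simp only [hp']
      rw [List.getElem_append_right (by simp)]
      simp
    have h2 : q[a]'(by omega) = true := by
      simp only [hq']
      rw [List.getElem_append_left (by simp [hlt])]
      simp
    simp [h1, h2] at hget
  · have : a = b := by omega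
    exact hpre.eq_of_length (by omega)

end BBaux

open BBaux

/-- if after `t` steps more than `2^(n-k)` terminating computations of
length ≤ n are still running, then `t ≤ BB(k + KP(n) + d)`. -/
theorem busy_beaver_upper_bound (U : List Bool →. ℕ) (hU : OptimalMachine U)
    (c : Nat.Partrec.Code)
    (hc : ∀ p : List Bool, U p = c.eval (Encodable.encode p))
    (M : List Bool →. ℕ) (hM : OptimalPrefix M) :
    ∃ d : ℕ, ∀ n : ℕ, ∀ k ≤ n, ∀ t : ℕ,
      2 ^ (n - k) <
        Set.ncard {p : List Bool | p.length ≤ n ∧ (U p).Dom ∧ t < compTime c p} →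
      t ≤ BB U c (k + (KPm M n).toNat + d) := by
  classical
  obtain ⟨cM, hcM⟩ := Nat.Partrec.Code.exists_code.1 hM.1.1
  have hMev : ∀ p : List Bool, eval cM (Encodable.encode p) = M p := by
    intro p
    have hid : (M p).map Encodable.encode = M p := Part.map_id' (fun x => rfl) _
    rw [hcM]
    simp [Encodable.encodek, hid]
  obtain ⟨d0, hd0⟩ := hU.2 (Vm c cM) (partrec_Vm c cM)
  refine ⟨d0 + 1, ?_⟩
  intro n k hk t hyp
  -- a short prefix program for n
  have hM1 : PrefixMachine M1 := ⟨partrec_M1, prefixFree_M1⟩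
  obtain ⟨c1, hc1⟩ := hM.2 _ hM1
  have hKP1 : KPm M1 n ≤ ((n + 1 : ℕ) : ℕ∞) := by
    have := sInf_le_len (M1_mem n)
    simpa [KPm] using this
  have hKPfin : KPm M n ≠ ⊤ := by
    intro htop
    have h1 := hc1 n
    rw [htop] at h1
    have h2 : (⊤ : ℕ∞) ≤ ((n + 1 + c1 : ℕ) : ℕ∞) :=
      le_trans h1 (by push_cast; exact add_le_add_left hKP1 _)
    rw [top_le_iff] at h2
    exact ENat.coe_ne_top _ h2
  have hKNat : KPm M n ≤ (((KPm M n).toNat : ℕ) : ℕ∞) := le_of_eq (ENat.coe_toNat hKPfin).symm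
  obtain ⟨p, hpM, hplen⟩ := exists_short (F := M) hKNat
  -- counting setup
  set g := n - k with hg
  set D := {x : List Bool | x.length ≤ n ∧ (U x).Dom} with hD
  have hDfin : D.Finite := (finite_len_le n).subset (fun x hx => hx.1)
  set Dc := D.ncard with hDc
  have hDcle : Dc + 1 ≤ 2 ^ (n + 1) := by
    have h1 : D ⊆ {x : List Bool | x.length ≤ n} := fun x hx => hx.1
    have h2 := Set.ncard_le_ncard h1 (finite_len_le n)
    have h3 := ncard_len_le n
    omega
  set a := Dc / 2 ^ g with ha
  have halt : a < 2 ^ (k + 1) := by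
    rw [ha, Nat.div_lt_iff_lt_mul (by positivity)]
    calc Dc < 2 ^ (n + 1) := by omega
      _ = 2 ^ (k + 1) * 2 ^ g := by rw [← pow_add]; congr 1; omega
  set w := bits (k + 1) a with hw
  have hwlen : w.length = k + 1 := length_bits _ _
  have hwval : bval w = a := bval_bits _ _ halt
  set q := p ++ w with hq
  have hAfin : ∀ j, {x : List Bool |
      x.length ≤ n ∧ (evaln j c (Encodable.encode x)).isSome}.Finite :=
    fun j => (finite_len_le n).subset (fun x hx => hx.1)
  have hUdom : ∀ x : List Bool, (U x).Dom ↔ (eval c (Encodable.encode x)).Dom :=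
    fun x => by rw [hc]
  -- Claim A : any passing stage witnesses a large count
  have claimA : ∀ j, checkb c cM j q = true → a * 2 ^ g ≤ cnt c n j := by
    intro j hj
    obtain ⟨pr, hpr, hinner⟩ := List.any_eq_true.1 hj
    obtain ⟨x, y⟩ := pr
    have hxy : x ++ y = q := (mem_splits q (x, y)).1 hpr
    rcases hev : evaln j cM (Encodable.encode x) with - | n'
    · simp [BBaux.inner, hev] at hinner
    · simp only [BBaux.inner, hev, Bool.and_eq_true, decide_eq_true_eq] at hinner
      obtain ⟨⟨hy1, hy2⟩, hcnt⟩ := hinner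
      have hn'M : n' ∈ M x := by rw [← hMev]; exact evaln_sound hev
      have hxq : x <+: q := ⟨y, hxy⟩
      have hpq : p <+: q := ⟨w, rfl⟩
      have hdx : (M x).Dom := Part.dom_iff_mem.2 ⟨n', hn'M⟩
      have hdp : (M p).Dom := Part.dom_iff_mem.2 ⟨n, hpM⟩
      have hxp : x = p := by
        rcases List.prefix_or_prefix_of_prefix hxq hpq with h | h
        · exact hM.1.2 x p hdx hdp h
        · exact (hM.1.2 p x hdp hdx h).symm
      subst hxp
      have hyw : y = w := List.append_cancel_left hxy
      subst hyw
      have hn' : n' = n := Part.mem_unique hn'M hpM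
      rw [hn'] at hcnt
      rw [hwval, hwlen] at hcnt
      rwa [show n + 1 - (k + 1) = g by omega] at hcnt
  -- count monotone in time
  have hcnt_mono : ∀ {j j' : ℕ}, j ≤ j' → cnt c n j ≤ cnt c n j' := by
    intro j j' hjj
    rw [cnt_eq_ncard, cnt_eq_ncard]
    refine Set.ncard_le_ncard ?_ (hAfin j')
    rintro x ⟨h1, h2⟩
    obtain ⟨v, hv⟩ := Option.isSome_iff_exists.1 h2
    exact ⟨h1, Option.isSome_iff_exists.2 ⟨v, evaln_mono hjj hv⟩⟩
  -- the key counting inequality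
  set Srun := {p' : List Bool | p'.length ≤ n ∧ (U p').Dom ∧ t < compTime c p'} with hSrun
  have hSfin : Srun.Finite := (finite_len_le n).subset (fun x hx => hx.1)
  set At := {x : List Bool | x.length ≤ n ∧ (evaln t c (Encodable.encode x)).isSome} with hAt
  have hdisj : Disjoint At Srun := by
    rw [Set.disjoint_left]
    rintro x ⟨h1, h2⟩ ⟨h3, h4, h5⟩
    have : compTime c x ≤ t := Nat.sInf_le h2
    omega
  have hsub : At ∪ Srun ⊆ D := by
    rintro x (⟨h1, h2⟩ | ⟨h1, h2, h3⟩)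
    · refine ⟨h1, ?_⟩
      obtain ⟨v, hv⟩ := Option.isSome_iff_exists.1 h2
      rw [hUdom]
      exact Part.dom_iff_mem.2 ⟨v, evaln_sound hv⟩
    · exact ⟨h1, h2⟩
  have hkey : cnt c n t + 2 ^ g + 1 ≤ Dc := by
    have h1 : (At ∪ Srun).ncard = At.ncard + Srun.ncard :=
      Set.ncard_union_eq hdisj (hAfin t) hSfin
    have h2 := Set.ncard_le_ncard hsub hDfin
    rw [h1] at h2
    have h3 : cnt c n t = At.ncard := cnt_eq_ncard c n t
    have h4 : 2 ^ g < Srun.ncard := hyp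
    omega
  -- existence of a passing stage
  obtain ⟨J1, hJ1⟩ := evaln_complete.1 (show n ∈ eval cM (Encodable.encode p) by
    rw [hMev]; exact hpM)
  obtain ⟨J2, hJ2⟩ : ∃ J2, ∀ x ∈ D, (evaln J2 c (Encodable.encode x)).isSome := by
    refine ⟨hDfin.toFinset.sup (fun x => compTime c x), fun x hx => ?_⟩
    have hdom : (eval c (Encodable.encode x)).Dom := (hUdom x).1 hx.2
    obtain ⟨v, hv⟩ := Option.isSome_iff_exists.1 (compTime_isSome hdom)
    exact Option.isSome_iff_exists.2
      ⟨v, evaln_mono (Finset.le_sup (f := fun x => compTime c x)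
        (hDfin.mem_toFinset.2 hx)) hv⟩
  have hcntJ2 : Dc ≤ cnt c n J2 := by
    rw [cnt_eq_ncard]
    exact Set.ncard_le_ncard (fun x hx => ⟨hx.1, hJ2 x hx⟩) (hAfin J2)
  have hchk : checkb c cM (max J1 J2) q = true := by
    refine List.any_eq_true.2 ⟨(p, w), (mem_splits q (p, w)).2 rfl, ?_⟩
    have hevJ : evaln (max J1 J2) cM (Encodable.encode p) = some n :=
      evaln_mono (le_max_left _ _) hJ1
    have c1 : 1 ≤ w.length := by omega
    have c2 : w.length ≤ n + 1 := by omega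
    have c3 : bval w * 2 ^ (n + 1 - w.length) ≤ cnt c n (max J1 J2) := by
      rw [hwval, hwlen, show n + 1 - (k + 1) = g by omega]
      calc a * 2 ^ g ≤ Dc := Nat.div_mul_le_self _ _
        _ ≤ cnt c n J2 := hcntJ2
        _ ≤ cnt c n (max J1 J2) := hcnt_mono (le_max_right _ _)
    simp only [BBaux.inner, hevJ]
    simp [c1, c2, c3]
  -- run the machine
  obtain ⟨j₀, hj₀, -⟩ := Nat.rfind_min' (p := fun j => checkb c cM j q) hchk
  have hmVm : (outBound c j₀ + 1) ∈ Vm c cM q := Part.mem_map_iff _ |>.2 ⟨j₀, hj₀, rfl⟩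
  have hj₀chk : checkb c cM j₀ q = true := by
    have := Nat.rfind_spec hj₀
    simpa using this
  have htj₀ : t < j₀ := by
    by_contra hle
    push_neg at hle
    have h1 := claimA j₀ hj₀chk
    have h2 := hcnt_mono hle
    have hdm : a * 2 ^ g + Dc % 2 ^ g = Dc := by rw [ha, Nat.mul_comm]; exact Nat.div_add_mod _ _
    have hmod : Dc % 2 ^ g < 2 ^ g := Nat.mod_lt _ (by positivity)
    omega
  -- a short U-program with the same output
  set m := outBound c j₀ + 1 with hm
  have hKUV : KU (Vm c cM) m ≤ ((q.length : ℕ) : ℕ∞) := sInf_le_len hmVm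
  have hlenq : q.length + d0 ≤ k + (KPm M n).toNat + (d0 + 1) := by
    have : q.length = p.length + w.length := by simp [hq]
    omega
  have hKUU : KU U m ≤ ((k + (KPm M n).toNat + (d0 + 1) : ℕ) : ℕ∞) := by
    calc KU U m ≤ KU (Vm c cM) m + (d0 : ℕ∞) := hd0 m
      _ ≤ ((q.length : ℕ) : ℕ∞) + (d0 : ℕ∞) := add_le_add_left hKUV _
      _ = ((q.length + d0 : ℕ) : ℕ∞) := by push_cast; ring
      _ ≤ _ := by exact_mod_cast hlenq
  obtain ⟨q', hq'U, hq'len⟩ := exists_short (F := U) hKUU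
  -- the short program runs longer than j₀
  have hq'dom : (eval c (Encodable.encode q')).Dom :=
    (hUdom q').1 (Part.dom_iff_mem.2 ⟨m, hq'U⟩)
  have hm_eval : m ∈ eval c (Encodable.encode q') := by rw [← hc]; exact hq'U
  obtain ⟨v, hv⟩ := Option.isSome_iff_exists.1 (compTime_isSome hq'dom)
  have hvm : v = m := Part.mem_unique (evaln_sound hv) hm_eval
  subst hvm
  have hbound : m ≤ outBound c (compTime c q') := evaln_le_outBound hv
  have hcj : j₀ < compTime c q' := by
    by_contra hle
    push_neg at hle
    have h1 := outBound_mono c hle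
    omega
  -- conclude via BB
  have hmem : compTime c q' ∈ {t' : ℕ | ∃ p' : List Bool,
      p'.length ≤ k + (KPm M n).toNat + (d0 + 1) ∧ (U p').Dom ∧ t' = compTime c p'} :=
    ⟨q', hq'len, Part.dom_iff_mem.2 ⟨m, hq'U⟩, rfl⟩
  have hbdd : BddAbove {t' : ℕ | ∃ p' : List Bool,
      p'.length ≤ k + (KPm M n).toNat + (d0 + 1) ∧ (U p').Dom ∧ t' = compTime c p'} := by
    refine Set.Finite.bddAbove (Set.Finite.subset
      ((finite_len_le (k + (KPm M n).toNat + (d0 + 1))).image (compTime c)) ?_)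
    rintro t' ⟨p', h1, h2, rfl⟩
    exact ⟨p', h1, rfl⟩
  have : compTime c q' ≤ BB U c (k + (KPm M n).toNat + (d0 + 1)) := le_csSup hbdd hmem
  omega
end

section
/- Let U be an effectively optimal machine and set A = {x : U(x) = 0} and B = {x : U(x) = 1}. Then A and B are disjoint, there is no total computable f : List Bool → Bool with f(x) = false for all x ∈ A and f(x) = true for all x ∈ B, and moreover for every partial computable h : List Bool →. Bool there is a real ε > 0 and an N such that E_n(h) ≥ ε for all n ≥ N (so liminf_{n→∞} E_n(h) > 0), where E_n(h) = (#{x : |x| ≤ n and (h(x) is undefined, or x ∈ A and h(x) = true, or x ∈ B and h(x) = false)})/2^{n+1}. -/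
open Filter

namespace CoarseSep
open Encodable Nat.Partrec Nat.Partrec.Code

/-- number of leading `true`s. -/
def lead (z : List Bool) : ℕ := z.foldr (fun b acc => cond b (acc + 1) 0) 0

@[simp] theorem lead_nil : lead [] = 0 := rfl
@[simp] theorem lead_cons (b : Bool) (z : List Bool) :
    lead (b :: z) = cond b (lead z + 1) 0 := rfl

def Zf (e : ℕ) (x : List Bool) : List Bool := List.replicate e true ++ false :: x

@[simp] theorem lead_Zf (e : ℕ) (x : List Bool) : lead (Zf e x) = e := by
  induction e with
  | zero => simp [Zf]
  | succ n ih => simpa [Zf, List.replicate_succ] using ih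

@[simp] theorem length_Zf (e : ℕ) (x : List Bool) : (Zf e x).length = x.length + e + 1 := by
  simp [Zf]; omega

theorem Zf_inj (e : ℕ) : Function.Injective (Zf e) := by
  intro x y hxy
  simpa [Zf] using hxy

theorem Zform (z : List Bool) (h1 : lead z < z.length) : ∃ x, z = Zf (lead z) x := by
  induction z with
  | nil => simp at h1
  | cons b t ih =>
    cases b with
    | false => exact ⟨t, rfl⟩
    | true =>
      simp only [lead_cons, cond_true, List.length_cons] at h1 ⊢
      obtain ⟨x, hx⟩ := ih (by omega)
      refine ⟨x, ?_⟩
      show true :: t = Zf (lead t + 1) x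
      rw [Zf, List.replicate_succ, List.cons_append]
      exact congrArg _ hx

def isZ (e : ℕ) (z : List Bool) : Bool := decide (lead z = e) && decide (e < z.length)

theorem isZ_iff {e : ℕ} {z : List Bool} : isZ e z = true ↔ ∃ x, z = Zf e x := by
  constructor
  · rintro h
    simp only [isZ, Bool.and_eq_true, decide_eq_true_eq] at h
    obtain ⟨x, hx⟩ := Zform z (h.1 ▸ h.2)
    exact ⟨x, by rwa [h.1] at hx⟩
  · rintro ⟨x, rfl⟩
    simp [isZ]

def cand (z : List Bool) : List (List Bool) :=
  (List.range (Encodable.encode z)).flatMap fun m =>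
    ((decode₂ (List Bool) m).map fun w => cond (isZ (lead z) w) [w] []).getD []

theorem mem_cand {z w : List Bool} :
    w ∈ cand z ↔ Encodable.encode w < Encodable.encode z ∧ ∃ x, w = Zf (lead z) x := by
  simp only [cand, List.mem_flatMap, List.mem_range]
  constructor
  · rintro ⟨m, hm, hw⟩
    rcases hd : decode₂ (List Bool) m with _ | w'
    · rw [hd] at hw; simp at hw
    · rw [hd] at hw
      rcases hiz : isZ (lead z) w' with _ | _ <;> simp [hiz] at hw
      subst hw
      have := Encodable.mem_decode₂.1 (Option.mem_def.2 hd)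
      exact ⟨this ▸ hm, isZ_iff.1 hiz⟩
  · rintro ⟨hlt, hform⟩
    refine ⟨Encodable.encode w, hlt, ?_⟩
    rw [show decode₂ (List Bool) (Encodable.encode w) = some w from
      Encodable.mem_decode₂.2 rfl]
    simp only [Option.map_some, Option.getD_some]
    rw [isZ_iff.2 hform]
    simp

def codeOf (z : List Bool) : Code := Denumerable.ofNat Code (lead z)

def stage (z : List Bool) (k : ℕ) : Bool :=
  (z :: cand z).foldr
    (fun w s => (evaln k (codeOf z) (Encodable.encode w)).isSome && s) true

theorem foldr_and {α : Type*} {l : List α} {p : α → Bool} :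
    (l.foldr (fun a s => p a && s) true = true) ↔ ∀ a ∈ l, p a = true := by
  induction l with
  | nil => simp
  | cons a l ih => simp [ih]

theorem foldr_or {α : Type*} {l : List α} {p : α → Bool} :
    (l.foldr (fun a s => p a || s) false = true) ↔ ∃ a ∈ l, p a = true := by
  induction l with
  | nil => simp
  | cons a l ih => simp [ih]

theorem stage_iff {z : List Bool} {k : ℕ} :
    stage z k = true ↔
      ∀ w ∈ z :: cand z, (evaln k (codeOf z) (Encodable.encode w)).isSome := by
  simp [stage, foldr_and]

def pzOf (z : List Bool) (t : ℕ) : ℕ := (evaln t (codeOf z) (Encodable.encode z)).getD 0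

def sel (z : List Bool) (t : ℕ) : ℕ ⊕ List Bool :=
  cond ((cand z).foldr
      (fun w s => (decide (evaln t (codeOf z) (Encodable.encode w) = some (pzOf z t))) || s)
      false)
    (Sum.inl (Encodable.encode z + 2))
    (Sum.inr ((decode₂ (List Bool) (pzOf z t)).getD []))

def That (h : List Bool →. Bool) (z : List Bool) : Part ℕ :=
  (Nat.rfind fun k => Part.some (stage z k)).bind fun t =>
    Sum.casesOn (sel z t) (fun n => Part.some n) (fun p => (h p).map fun b => cond b 0 1)


section Semantics

variable {g : List Bool → List Bool} {cg : Code}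

theorem halt_list (hev : ∀ w, eval cg (Encodable.encode w) = Part.some (Encodable.encode (g w)))
    (l : List (List Bool)) : ∃ k, ∀ w ∈ l, (evaln k cg (Encodable.encode w)).isSome := by
  induction l with
  | nil => exact ⟨0, by simp⟩
  | cons a l ih =>
    obtain ⟨k1, hk1⟩ := ih
    have hmem : Encodable.encode (g a) ∈ eval cg (Encodable.encode a) := by
      rw [hev]; exact Part.mem_some _
    obtain ⟨k2, hk2⟩ := evaln_complete.1 hmem
    refine ⟨max k1 k2, fun w hw => ?_⟩
    rcases List.mem_cons.1 hw with rfl | hw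
    · exact Option.isSome_iff_exists.2 ⟨_, evaln_mono (le_max_right _ _) hk2⟩
    · obtain ⟨v, hv⟩ := Option.isSome_iff_exists.1 (hk1 w hw)
      exact Option.isSome_iff_exists.2 ⟨v, evaln_mono (le_max_left _ _) hv⟩

theorem evaln_stage (hev : ∀ w, eval cg (Encodable.encode w) = Part.some (Encodable.encode (g w)))
    {z : List Bool} {k : ℕ} (hz : codeOf z = cg) (hst : stage z k = true) {w : List Bool}
    (hw : w ∈ z :: cand z) :
    evaln k cg (Encodable.encode w) = some (Encodable.encode (g w)) := by
  have h1 := stage_iff.1 hst w hw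
  rw [hz] at h1
  obtain ⟨v, hv⟩ := Option.isSome_iff_exists.1 h1
  have hvm : v ∈ eval cg (Encodable.encode w) := evaln_sound (Option.mem_def.2 hv)
  rw [hev] at hvm
  rw [hv, Part.mem_some_iff.1 hvm]

theorem That_eq (hev : ∀ w, eval cg (Encodable.encode w) = Part.some (Encodable.encode (g w)))
    (h : List Bool →. Bool) (z : List Bool) (hz : codeOf z = cg) :
    That h z = if ∃ w ∈ cand z, g w = g z then Part.some (Encodable.encode z + 2)
      else (h (g z)).map fun b => cond b 0 1 := by
  obtain ⟨k0, hk0⟩ := halt_list hev (z :: cand z)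
  have hst0 : stage z k0 = true := stage_iff.2 (by rwa [hz])
  obtain ⟨t, ht, -⟩ := Nat.rfind_min' (p := fun k => stage z k) hst0
  have hstt : stage z t = true := by simpa using Nat.rfind_spec ht
  have hrf : (Nat.rfind fun k => Part.some (stage z k)) = Part.some t :=
    Part.eq_some_iff.2 ht
  have hez : evaln t cg (Encodable.encode z) = some (Encodable.encode (g z)) :=
    evaln_stage hev hz hstt List.mem_cons_self
  have hpz : pzOf z t = Encodable.encode (g z) := by
    rw [pzOf, hz, hez]; rfl
  have hcoll : ((cand z).foldr
      (fun w s => (decide (evaln t (codeOf z) (Encodable.encode w) = some (pzOf z t))) || s)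
      false) = true ↔ ∃ w ∈ cand z, g w = g z := by
    rw [foldr_or]
    constructor
    · rintro ⟨w, hw, hwe⟩
      rw [hz, evaln_stage hev hz hstt (List.mem_cons_of_mem _ hw), hpz,
        decide_eq_true_eq] at hwe
      exact ⟨w, hw, Encodable.encode_injective (Option.some.inj hwe)⟩
    · rintro ⟨w, hw, hwe⟩
      refine ⟨w, hw, ?_⟩
      rw [hz, evaln_stage hev hz hstt (List.mem_cons_of_mem _ hw), hpz, hwe]
      simp
  rw [That, hrf, Part.bind_some]
  by_cases hC : ∃ w ∈ cand z, g w = g z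
  · rw [if_pos hC, sel, (hcoll.2 hC)]
    rfl
  · rw [if_neg hC, sel,
      show ((cand z).foldr
        (fun w s => (decide (evaln t (codeOf z) (Encodable.encode w) = some (pzOf z t))) || s)
        false) = false from Bool.eq_false_iff.2 (fun hc => hC (hcoll.1 hc)), hpz,
      show decode₂ (List Bool) (Encodable.encode (g z)) = some (g z) from
        Encodable.mem_decode₂.2 rfl]
    rfl

end Semantics


section Computability

open Primrec

theorem primrec_lead : Primrec lead := by
  have h : Primrec₂ fun (_ : List Bool) (p : Bool × ℕ) => cond p.1 (p.2 + 1) 0 :=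
    (Primrec.cond (Primrec.fst.comp Primrec.snd)
      (Primrec.succ.comp (Primrec.snd.comp Primrec.snd)) (Primrec.const 0)).to₂
  exact (Primrec.list_foldr Primrec.id (Primrec.const 0) h).of_eq fun l => rfl

theorem primrec_isZ : Primrec₂ isZ := by
  have h1 : Primrec fun p : ℕ × List Bool => decide (lead p.2 = p.1) :=
    (Primrec.eq.comp (primrec_lead.comp Primrec.snd) Primrec.fst).decide
  have h2 : Primrec fun p : ℕ × List Bool => decide (p.1 < p.2.length) :=
    (Primrec.nat_lt.comp Primrec.fst (Primrec.list_length.comp Primrec.snd)).decide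
  exact (Primrec.and.comp h1 h2 : Primrec _)

theorem primrec_cand : Primrec cand := by
  have hinner : Primrec₂ fun (p : List Bool × ℕ) (w : List Bool) =>
      cond (isZ (lead p.1) w) [w] ([] : List (List Bool)) :=
    (Primrec.cond
      (primrec_isZ.comp (primrec_lead.comp (Primrec.fst.comp Primrec.fst)) Primrec.snd)
      (Primrec.list_cons.comp Primrec.snd (Primrec.const []))
      (Primrec.const [])).to₂
  have hg : Primrec fun (p : List Bool × ℕ) =>
      ((decode₂ (List Bool) p.2).map fun w => cond (isZ (lead p.1) w) [w] []).getD [] :=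
    Primrec.option_getD.comp
      (Primrec.option_map (Primrec.decode₂.comp Primrec.snd) hinner)
      (Primrec.const [])
  exact Primrec.list_flatMap (Primrec.list_range.comp Primrec.encode) hg.to₂

theorem primrec_codeOf : Primrec codeOf :=
  (Primrec.ofNat Code).comp primrec_lead

theorem primrec_evaln3 :
    Primrec fun q : (ℕ × Code) × ℕ => evaln q.1.1 q.1.2 q.2 := primrec_evaln

theorem primrec_stage : Primrec₂ stage := by
  have hev : Primrec fun q : (List Bool × ℕ) × (List Bool × Bool) =>
      (evaln q.1.2 (codeOf q.1.1) (Encodable.encode q.2.1)).isSome :=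
    Primrec.option_isSome.comp (primrec_evaln.comp
      (((Primrec.snd.comp Primrec.fst).pair
        (primrec_codeOf.comp (Primrec.fst.comp Primrec.fst))).pair
        (Primrec.encode.comp (Primrec.fst.comp Primrec.snd))))
  have h : Primrec₂ fun (a : List Bool × ℕ) (p : (List Bool) × Bool) =>
      ((evaln a.2 (codeOf a.1) (Encodable.encode p.1)).isSome && p.2) :=
    (Primrec.and.comp hev (Primrec.snd.comp Primrec.snd)).to₂
  exact (Primrec.list_foldr
    (Primrec.list_cons.comp Primrec.fst (primrec_cand.comp Primrec.fst))
    (Primrec.const true) h).to₂.of_eq fun z k => rfl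

theorem primrec_pzOf : Primrec₂ pzOf := by
  have : Primrec fun a : List Bool × ℕ =>
      (evaln a.2 (codeOf a.1) (Encodable.encode a.1)).getD 0 :=
    Primrec.option_getD.comp (primrec_evaln.comp
      ((Primrec.snd.pair (primrec_codeOf.comp Primrec.fst)).pair
        (Primrec.encode.comp Primrec.fst))) (Primrec.const 0)
  exact this.to₂

theorem primrec_sel : Primrec₂ sel := by
  have hco : Primrec fun a : List Bool × ℕ => ((cand a.1).foldr
      (fun w s => (decide (evaln a.2 (codeOf a.1) (Encodable.encode w) = some (pzOf a.1 a.2))) || s)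
      false) := by
    have hin : Primrec₂ fun (a : List Bool × ℕ) (p : (List Bool) × Bool) =>
        ((decide (evaln a.2 (codeOf a.1) (Encodable.encode p.1)
          = some (pzOf a.1 a.2))) || p.2) := by
      have he : Primrec fun q : (List Bool × ℕ) × (List Bool × Bool) =>
          evaln q.1.2 (codeOf q.1.1) (Encodable.encode q.2.1) :=
        primrec_evaln.comp
          (((Primrec.snd.comp Primrec.fst).pair
            (primrec_codeOf.comp (Primrec.fst.comp Primrec.fst))).pair
            (Primrec.encode.comp (Primrec.fst.comp Primrec.snd)))
      have hp : Primrec fun q : (List Bool × ℕ) × (List Bool × Bool) =>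
          (some (pzOf q.1.1 q.1.2) : Option ℕ) :=
        Primrec.option_some.comp (primrec_pzOf.comp (Primrec.fst.comp Primrec.fst)
          (Primrec.snd.comp Primrec.fst))
      exact (Primrec.or.comp (Primrec.eq.comp he hp).decide
        (Primrec.snd.comp Primrec.snd)).to₂
    exact Primrec.list_foldr (primrec_cand.comp Primrec.fst) (Primrec.const false) hin
  have hl : Primrec fun a : List Bool × ℕ => Encodable.encode a.1 + 2 :=
    Primrec.nat_add.comp (Primrec.encode.comp Primrec.fst) (Primrec.const 2)
  have hr : Primrec fun a : List Bool × ℕ => (decode₂ (List Bool) (pzOf a.1 a.2)).getD [] :=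
    Primrec.option_getD.comp
      (Primrec.decode₂.comp (primrec_pzOf.comp Primrec.fst Primrec.snd))
      (Primrec.const [])
  exact (Primrec.cond hco (Primrec.sumInl.comp hl) (Primrec.sumInr.comp hr)).to₂

theorem partrec_That {h : List Bool →. Bool} (hh : Partrec h) : Partrec (That h) := by
  have hrf : Partrec fun z : List Bool => Nat.rfind fun k => Part.some (stage z k) := by
    have : Partrec₂ fun (z : List Bool) (k : ℕ) => (Part.some (stage z k) : Part Bool) :=
      (primrec_stage.to_comp).partrec₂
    exact Partrec.rfind this
  have hbody : Partrec₂ fun (z : List Bool) (t : ℕ) =>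
      Sum.casesOn (sel z t) (fun n => Part.some n)
        (fun p => (h p).map fun b => cond b 0 1) := by
    have hsel : Computable fun a : List Bool × ℕ => sel a.1 a.2 :=
      (primrec_sel.comp Primrec.fst Primrec.snd).to_comp
    have hg : Computable₂ fun (_ : List Bool × ℕ) (n : ℕ) => n := Computable.snd.to₂
    have hpart : Partrec₂ fun (_ : List Bool × ℕ) (p : List Bool) =>
        (h p).map fun b => cond b 0 1 := by
      have := (hh.comp (Computable.snd : Computable fun q : (List Bool × ℕ) × List Bool => q.2))
      exact (this.map (((Primrec.dom_bool fun b => cond b 0 1).to_comp).comp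
        Computable.snd).to₂).to₂
    exact (Partrec.sumCasesOn_right hsel hg hpart).to₂
  exact (hrf.bind hbody).of_eq fun z => rfl

end Computability


theorem ncard_length_eq (m : ℕ) : {x : List Bool | x.length = m}.ncard = 2 ^ m := by
  rw [← Nat.card_coe_set_eq]
  have h1 : Nat.card ↥{x : List Bool | x.length = m} = Nat.card (Fin m → Bool) :=
    Nat.card_congr (Equiv.vectorEquivFin Bool m)
  rw [h1, Nat.card_eq_fintype_card]
  simp

end CoarseSep

/-- the sets of programs of an effectively optimal machine producing 0 and 1
are disjoint, computably inseparable, and every partial computable separator has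
liminf error density bounded away from 0. -/
theorem coarse_inseparability (U : List Bool →. ℕ) (hU : EffOptimal U) :
    Disjoint {x : List Bool | 0 ∈ U x} {x : List Bool | 1 ∈ U x} ∧
    (¬ ∃ f : List Bool → Bool, Computable f ∧
      (∀ x, 0 ∈ U x → f x = false) ∧ (∀ x, 1 ∈ U x → f x = true)) ∧
    (∀ h : List Bool →. Bool, Partrec h → ∃ ε : ℝ, 0 < ε ∧ ∃ N : ℕ, ∀ n ≥ N,
      ε ≤ (Set.ncard {x : List Bool | x.length ≤ n ∧
            (¬(h x).Dom ∨ (0 ∈ U x ∧ true ∈ h x) ∨ (1 ∈ U x ∧ false ∈ h x))} : ℝ)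
          / 2 ^ (n + 1)) := by
  have main : ∀ h : List Bool →. Bool, Partrec h → ∃ ε : ℝ, 0 < ε ∧ ∃ N : ℕ, ∀ n ≥ N,
      ε ≤ (Set.ncard {x : List Bool | x.length ≤ n ∧
            (¬(h x).Dom ∨ (0 ∈ U x ∧ true ∈ h x) ∨ (1 ∈ U x ∧ false ∈ h x))} : ℝ)
          / 2 ^ (n + 1) := by
    intro h hh
    obtain ⟨g, hgc, ⟨cL, hcL⟩, hgU⟩ := hU.2 (CoarseSep.That h) (CoarseSep.partrec_That hh)
    obtain ⟨cg, hcg⟩ := Nat.Partrec.Code.exists_code.1 hgc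
    have hev : ∀ w : List Bool, Nat.Partrec.Code.eval cg (Encodable.encode w)
        = Part.some (Encodable.encode (g w)) := by
      intro w
      rw [hcg]
      simp [Encodable.encodek]
    set e0 := Encodable.encode cg with he0
    have hcode : ∀ x : List Bool, CoarseSep.codeOf (CoarseSep.Zf e0 x) = cg := by
      intro x
      rw [CoarseSep.codeOf, CoarseSep.lead_Zf, he0, Denumerable.ofNat_encode]
    have key : ∀ x1 x2 : List Bool,
        Encodable.encode (CoarseSep.Zf e0 x1) < Encodable.encode (CoarseSep.Zf e0 x2) →
        g (CoarseSep.Zf e0 x1) ≠ g (CoarseSep.Zf e0 x2) := by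
      intro x1 x2 hlt hg12
      have hmem : CoarseSep.Zf e0 x1 ∈ CoarseSep.cand (CoarseSep.Zf e0 x2) :=
        CoarseSep.mem_cand.2 ⟨hlt, x1, by rw [CoarseSep.lead_Zf]⟩
      have hU2 : U (g (CoarseSep.Zf e0 x2))
          = Part.some (Encodable.encode (CoarseSep.Zf e0 x2) + 2) := by
        rw [hgU, CoarseSep.That_eq hev h _ (hcode x2), if_pos ⟨_, hmem, hg12⟩]
      have hU1 : CoarseSep.That h (CoarseSep.Zf e0 x1)
          = Part.some (Encodable.encode (CoarseSep.Zf e0 x2) + 2) := by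
        rw [← hgU, hg12, hU2]
      rw [CoarseSep.That_eq hev h _ (hcode x1)] at hU1
      by_cases hC : ∃ w ∈ CoarseSep.cand (CoarseSep.Zf e0 x1), g w = g (CoarseSep.Zf e0 x1)
      · rw [if_pos hC] at hU1
        have := Part.some_inj.1 hU1
        omega
      · rw [if_neg hC] at hU1
        have hmem2 : Encodable.encode (CoarseSep.Zf e0 x2) + 2
            ∈ (h (g (CoarseSep.Zf e0 x1))).map fun b => cond b 0 1 := by
          rw [hU1]; exact Part.mem_some _
        obtain ⟨b, -, hbe⟩ := Part.mem_map_iff _ |>.1 hmem2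
        cases b <;> simp at hbe <;> omega
    have nocoll : Function.Injective fun x => g (CoarseSep.Zf e0 x) := by
      intro x1 x2 hg12
      by_contra hne
      have hZ : CoarseSep.Zf e0 x1 ≠ CoarseSep.Zf e0 x2 :=
        fun hq => hne (CoarseSep.Zf_inj e0 hq)
      have hE : Encodable.encode (CoarseSep.Zf e0 x1)
          ≠ Encodable.encode (CoarseSep.Zf e0 x2) :=
        fun hq => hZ (Encodable.encode_injective hq)
      rcases lt_or_gt_of_ne hE with hlt | hlt
      · exact key x1 x2 hlt hg12
      · exact key x2 x1 hlt hg12.symm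
    have errpt : ∀ x : List Bool,
        ¬(h (g (CoarseSep.Zf e0 x))).Dom
        ∨ (0 ∈ U (g (CoarseSep.Zf e0 x)) ∧ true ∈ h (g (CoarseSep.Zf e0 x)))
        ∨ (1 ∈ U (g (CoarseSep.Zf e0 x)) ∧ false ∈ h (g (CoarseSep.Zf e0 x))) := by
      intro x
      have hnc : ¬ ∃ w ∈ CoarseSep.cand (CoarseSep.Zf e0 x), g w = g (CoarseSep.Zf e0 x) := by
        rintro ⟨w, hw, hwe⟩
        obtain ⟨hltw, x', hx'⟩ := CoarseSep.mem_cand.1 hw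
        rw [CoarseSep.lead_Zf] at hx'
        subst hx'
        have hxx : x' = x := nocoll hwe
        subst hxx
        exact lt_irrefl _ hltw
      have hUq : U (g (CoarseSep.Zf e0 x))
          = (h (g (CoarseSep.Zf e0 x))).map fun b => cond b 0 1 := by
        rw [hgU, CoarseSep.That_eq hev h _ (hcode x), if_neg hnc]
      by_cases hd : (h (g (CoarseSep.Zf e0 x))).Dom
      · obtain ⟨b, hb⟩ := Part.dom_iff_mem.1 hd
        cases b
        · exact Or.inr (Or.inr ⟨by
            rw [hUq]; exact (Part.mem_map_iff _).2 ⟨false, hb, rfl⟩, hb⟩)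
        · exact Or.inr (Or.inl ⟨by
            rw [hUq]; exact (Part.mem_map_iff _).2 ⟨true, hb, rfl⟩, hb⟩)
      · exact Or.inl hd
    refine ⟨1 / 2 ^ (cL + e0 + 2), by positivity, cL + e0 + 1, fun n hn => ?_⟩
    set m := n - (cL + e0 + 1) with hm
    set E := {x : List Bool | x.length ≤ n ∧
      (¬(h x).Dom ∨ (0 ∈ U x ∧ true ∈ h x) ∨ (1 ∈ U x ∧ false ∈ h x))} with hE
    have hsub : (fun x => g (CoarseSep.Zf e0 x)) '' {x : List Bool | x.length = m} ⊆ E := by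
      rintro q ⟨x, hx, rfl⟩
      refine ⟨?_, errpt x⟩
      show (g (CoarseSep.Zf e0 x)).length ≤ n
      have h1 := hcL (CoarseSep.Zf e0 x)
      rw [CoarseSep.length_Zf] at h1
      have hx' : x.length = m := hx
      omega
    have hEfin : E.Finite := (List.finite_length_le Bool n).subset fun x hx => hx.1
    have hcard : (2 : ℕ) ^ m ≤ E.ncard := by
      calc (2:ℕ) ^ m = {x : List Bool | x.length = m}.ncard :=
            (CoarseSep.ncard_length_eq m).symm
        _ = ((fun x => g (CoarseSep.Zf e0 x)) '' {x : List Bool | x.length = m}).ncard :=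
            (Set.ncard_image_of_injective _ nocoll).symm
        _ ≤ E.ncard := Set.ncard_le_ncard hsub hEfin
    rw [div_le_div_iff₀ (by positivity) (by positivity)]
    have hn1 : n + 1 = m + (cL + e0 + 2) := by omega
    calc (1:ℝ) * 2 ^ (n+1) = 2 ^ m * 2 ^ (cL + e0 + 2) := by
          rw [one_mul, ← pow_add, ← hn1]
      _ ≤ (E.ncard : ℝ) * 2 ^ (cL + e0 + 2) := by
          gcongr
          exact_mod_cast hcard
  refine ⟨?_, ?_, main⟩
  · rw [Set.disjoint_left]
    intro x h0 h1
    exact absurd (Part.mem_unique h0 h1) (by simp)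
  · rintro ⟨f, hf, hf0, hf1⟩
    obtain ⟨ε, hε, N, hN⟩ := main (fun x => Part.some (f x)) hf
    have hempty : {x : List Bool | x.length ≤ N ∧
        (¬(Part.some (f x)).Dom ∨ (0 ∈ U x ∧ true ∈ Part.some (f x))
          ∨ (1 ∈ U x ∧ false ∈ Part.some (f x)))} = ∅ := by
      ext x
      simp only [Set.mem_setOf_eq, Set.mem_empty_iff_false, iff_false, not_and, not_or]
      intro _
      refine ⟨by simp [Part.some_dom], fun h0 h1 => ?_, fun h0 h1 => ?_⟩
      · rw [Part.mem_some_iff] at h1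
        have h2 := hf0 x h0
        rw [← h1] at h2
        exact Bool.noConfusion h2
      · rw [Part.mem_some_iff] at h1
        have h2 := hf1 x h0
        rw [← h1] at h2
        exact Bool.noConfusion h2
    have := hN N le_rfl
    rw [hempty] at this
    simp at this
    linarith
end
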